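/- arXiv:1508.06766 — 3 statements merged into one kernel-verified Lean document; each statement's English description precedes it below -/
import Mathlib

section
/- Let p>2, let u be a nonnegative classical solution of u_t−Δu=|∇u|^p in Q_T with u=0 on Γ_T, having an isolated gradient blowup point at (0,0,T). Then there exists a constant C>0 (possibly depending on u) such that |u_t|≤C on Q̃:=(ω̄'×[T/2,T])∖{(0,0,T)}. -/
open Real Set Filter MeasureTheory

noncomputable section

/-- Partial derivative of `u(x,y,t)` with respect to `x`. -/
def pdx (u : ℝ → ℝ → ℝ → ℝ) (x y t : ℝ) : ℝ := deriv (fun s => u s y t) x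

/-- Partial derivative with respect to `y`. -/
def pdy (u : ℝ → ℝ → ℝ → ℝ) (x y t : ℝ) : ℝ := deriv (fun s => u x s t) y

/-- Partial derivative with respect to `t`. -/
def pdt (u : ℝ → ℝ → ℝ → ℝ) (x y t : ℝ) : ℝ := deriv (fun s => u x y s) t

/-- Second partial derivative with respect to `x`. -/
def pdxx (u : ℝ → ℝ → ℝ → ℝ) (x y t : ℝ) : ℝ := deriv (fun s => pdx u s y t) x

/-- Second partial derivative with respect to `y`. -/
def pdyy (u : ℝ → ℝ → ℝ → ℝ) (x y t : ℝ) : ℝ := deriv (fun s => pdy u x s t) y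

/-- Mixed second partial derivative `u_{xy}` (first `x`, then `y`). -/
def pdxy (u : ℝ → ℝ → ℝ → ℝ) (x y t : ℝ) : ℝ := deriv (fun s => pdx u x s t) y

/-- The norm of the spatial gradient, `|∇u| = (u_x² + u_y²)^{1/2}`. -/
def gradNorm (u : ℝ → ℝ → ℝ → ℝ) (x y t : ℝ) : ℝ :=
  Real.sqrt ((pdx u x y t) ^ 2 + (pdy u x y t) ^ 2)

/-- `C^{2,1}`-type regularity of `u` at the point `(x,y,t)`: twice (continuously)
differentiable in the space variables and once in time. -/
def C21At (u : ℝ → ℝ → ℝ → ℝ) (x y t : ℝ) : Prop :=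
  DifferentiableAt ℝ (fun s => u s y t) x ∧
  DifferentiableAt ℝ (fun s => u x s t) y ∧
  DifferentiableAt ℝ (fun s => u x y s) t ∧
  DifferentiableAt ℝ (fun s => pdx u s y t) x ∧
  DifferentiableAt ℝ (fun s => pdy u x s t) y ∧
  DifferentiableAt ℝ (fun s => pdx u x s t) y ∧
  ContinuousAt (fun q : ℝ × ℝ × ℝ => u q.1 q.2.1 q.2.2) (x, y, t) ∧
  ContinuousAt (fun q : ℝ × ℝ × ℝ => pdx u q.1 q.2.1 q.2.2) (x, y, t) ∧
  ContinuousAt (fun q : ℝ × ℝ × ℝ => pdy u q.1 q.2.1 q.2.2) (x, y, t) ∧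
  ContinuousAt (fun q : ℝ × ℝ × ℝ => pdt u q.1 q.2.1 q.2.2) (x, y, t) ∧
  ContinuousAt (fun q : ℝ × ℝ × ℝ => pdxx u q.1 q.2.1 q.2.2) (x, y, t) ∧
  ContinuousAt (fun q : ℝ × ℝ × ℝ => pdyy u q.1 q.2.1 q.2.2) (x, y, t) ∧
  ContinuousAt (fun q : ℝ × ℝ × ℝ => pdxy u q.1 q.2.1 q.2.2) (x, y, t)

/-- `u` is a nonnegative classical solution of `u_t - Δu = |∇u|^p` in
`Q_T = ω × (0,T)`, `ω = (-L,L) × (0,L)`, with `u = 0` on `Γ_T = (-L,L) × {0} × (0,T)`. -/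
structure ClassicalSolution (p L T : ℝ) (u : ℝ → ℝ → ℝ → ℝ) : Prop where
  nonneg : ∀ ⦃x y t : ℝ⦄, |x| ≤ L → y ∈ Icc (0:ℝ) L → t ∈ Ioo 0 T → 0 ≤ u x y t
  smooth : ∀ ⦃x y t : ℝ⦄, |x| ≤ L → y ∈ Icc (0:ℝ) L → t ∈ Ioo 0 T → C21At u x y t
  pde : ∀ ⦃x y t : ℝ⦄, |x| < L → y ∈ Ioo (0:ℝ) L → t ∈ Ioo 0 T →
    pdt u x y t - (pdxx u x y t + pdyy u x y t) = gradNorm u x y t ^ p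
  bc : ∀ ⦃x t : ℝ⦄, |x| < L → t ∈ Ioo 0 T → u x 0 t = 0

/-- If `g` is differentiable at `c` and `g s ≤ g c` for `s` slightly to the left of `c`,
then `deriv g c ≥ 0`. -/
lemma deriv_nonneg_of_left_le {g : ℝ → ℝ} {c : ℝ}
    (hg : DifferentiableAt ℝ g c) (h : ∀ᶠ s in nhdsWithin c (Iio c), g s ≤ g c) :
    0 ≤ deriv g c := by
  have hslope : Tendsto (slope g c) (nhdsWithin c {c}ᶜ) (nhds (deriv g c)) :=
    hasDerivAt_iff_tendsto_slope.1 hg.hasDerivAt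
  have hle : nhdsWithin c (Iio c) ≤ nhdsWithin c {c}ᶜ :=
    nhdsWithin_mono _ (fun s hs => ne_of_lt hs)
  have hslope' : Tendsto (slope g c) (nhdsWithin c (Iio c)) (nhds (deriv g c)) :=
    hslope.mono_left hle
  have hev : ∀ᶠ s in nhdsWithin c (Iio c), 0 ≤ slope g c s := by
    filter_upwards [h, self_mem_nhdsWithin] with s hs hs'
    rw [slope_def_field]
    apply div_nonneg_iff.2
    right
    constructor
    · linarith
    · simp only [mem_Iio] at hs'; linarith
  exact ge_of_tendsto hslope' hev

/-- Second derivative test: at an interior local maximum, the second derivative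
is nonpositive (given differentiability near the point, and second differentiability at it). -/
lemma deriv2_nonpos_of_isLocalMax {f : ℝ → ℝ} {x : ℝ}
    (hd : ∀ᶠ s in nhds x, DifferentiableAt ℝ f s)
    (hd2 : DifferentiableAt ℝ (deriv f) x)
    (hmax : IsLocalMax f x) : deriv (deriv f) x ≤ 0 := by
  by_contra hpos
  push_neg at hpos
  have h1 : deriv f x = 0 := hmax.deriv_eq_zero
  -- eventually to the right, deriv f > 0
  have hslope : Tendsto (slope (deriv f) x) (nhdsWithin x {x}ᶜ) (nhds (deriv (deriv f) x)) :=
    hasDerivAt_iff_tendsto_slope.1 hd2.hasDerivAt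
  have hgt : ∀ᶠ s in nhdsWithin x {x}ᶜ, 0 < slope (deriv f) x s :=
    hslope.eventually (eventually_gt_nhds hpos)
  have hgt' : ∀ᶠ s in nhdsWithin x (Ioi x), 0 < deriv f s := by
    have hle : nhdsWithin x (Ioi x) ≤ nhdsWithin x {x}ᶜ :=
      nhdsWithin_mono _ (fun s hs => ne_of_gt hs)
    filter_upwards [hgt.filter_mono hle, self_mem_nhdsWithin] with s hs hs'
    rw [slope_def_field] at hs
    simp only [mem_Ioi] at hs'
    rw [h1, sub_zero] at hs
    have hsx : 0 < s - x := by linarith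
    have := mul_pos hs hsx
    rw [div_mul_cancel₀] at this
    · linarith
    · exact ne_of_gt hsx
  have hdiff' : ∀ᶠ s in nhdsWithin x (Ioi x), DifferentiableAt ℝ f s :=
    hd.filter_mono nhdsWithin_le_nhds
  have hmax' : ∀ᶠ s in nhdsWithin x (Ioi x), f s ≤ f x :=
    hmax.filter_mono nhdsWithin_le_nhds
  obtain ⟨u, hu, hsub⟩ := mem_nhdsGT_iff_exists_Ioc_subset.1
    ((hgt'.and (hdiff'.and hmax')).mono (fun s hs => hs))
  simp only [mem_Ioi] at hu
  -- f is strictly monotone on [x, u]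
  have hdiffx : DifferentiableAt ℝ f x := hd.self_of_nhds
  have hmono : StrictMonoOn f (Icc x u) := by
    apply strictMonoOn_of_deriv_pos (convex_Icc x u)
    · intro s hs
      rcases eq_or_lt_of_le hs.1 with rfl | hlt
      · exact hdiffx.continuousAt.continuousWithinAt
      · exact ((hsub ⟨hlt, hs.2⟩).2.1).continuousAt.continuousWithinAt
    · intro s hs
      rw [interior_Icc] at hs
      exact (hsub ⟨hs.1, le_of_lt hs.2⟩).1
  have := hmono (left_mem_Icc.2 (le_of_lt hu)) (right_mem_Icc.2 (le_of_lt hu)) hu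
  have := (hsub (right_mem_Ioc.2 hu)).2.2
  linarith
/-- Elementary parabolic maximum principle on a box, for a function whose
"PDE" information is only needed at points where the spatial gradient vanishes. -/
lemma maxprin (l a b K : ℝ) (hab : a < b)
    (w : ℝ → ℝ → ℝ → ℝ)
    (hcont : ∀ x y t : ℝ, |x| ≤ l → y ∈ Icc (0:ℝ) l → t ∈ Icc a b →
      ContinuousAt (fun q : ℝ × ℝ × ℝ => w q.1 q.2.1 q.2.2) (x, y, t))
    (hint : ∀ x y t : ℝ, |x| < l → y ∈ Ioo (0:ℝ) l → t ∈ Ioc a b →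
      (∀ᶠ s in nhds x, DifferentiableAt ℝ (fun s' => w s' y t) s) ∧
      (∀ᶠ s in nhds y, DifferentiableAt ℝ (fun s' => w x s' t) s) ∧
      DifferentiableAt ℝ (fun s => pdx w s y t) x ∧
      DifferentiableAt ℝ (fun s => pdy w x s t) y ∧
      DifferentiableAt ℝ (fun s => w x y s) t ∧
      (pdx w x y t = 0 → pdy w x y t = 0 →
        pdt w x y t ≤ pdxx w x y t + pdyy w x y t))
    (hbd : ∀ x y t : ℝ, |x| ≤ l → y ∈ Icc (0:ℝ) l → t ∈ Icc a b →
      (y = 0 ∨ |x| = l ∨ y = l ∨ t = a) → w x y t ≤ K) :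
    ∀ x y t : ℝ, |x| ≤ l → y ∈ Icc (0:ℝ) l → t ∈ Icc a b → w x y t ≤ K := by
  intro x y t hx hy ht
  have hba : 0 < b - a := by linarith
  apply le_of_forall_pos_le_add
  intro ε hε
  set ε' : ℝ := ε / (b - a) with hε'def
  have hε' : 0 < ε' := div_pos hε hba
  have hεba : ε' * (b - a) = ε := div_mul_cancel₀ ε (ne_of_gt hba)
  set D : Set (ℝ × ℝ × ℝ) := Icc (-l) l ×ˢ Icc (0:ℝ) l ×ˢ Icc a b with hD
  have hDcompact : IsCompact D := isCompact_Icc.prod (isCompact_Icc.prod isCompact_Icc)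
  have hxl : (0:ℝ) ≤ l := le_trans (abs_nonneg x) (le_trans hx (le_refl l)) |>.trans (le_refl l)
  have hDne : D.Nonempty := ⟨(x, y, t), ⟨abs_le.1 hx, hy, ht⟩⟩
  set F : ℝ × ℝ × ℝ → ℝ := fun q => w q.1 q.2.1 q.2.2 - ε' * q.2.2 with hF
  have hFcont : ContinuousOn F D := by
    intro q hq
    obtain ⟨hq1, hq2, hq3⟩ := hq
    have h1 : ContinuousAt (fun q : ℝ × ℝ × ℝ => w q.1 q.2.1 q.2.2) q :=
      hcont q.1 q.2.1 q.2.2 (abs_le.2 hq1) hq2 hq3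
    exact (h1.sub ((continuous_const.mul (continuous_snd.comp continuous_snd)).continuousAt)).continuousWithinAt
  obtain ⟨q₀, hq₀D, hq₀max⟩ := hDcompact.exists_isMaxOn hDne hFcont
  obtain ⟨x₀, y₀, t₀⟩ := q₀
  obtain ⟨hx₀, hy₀, ht₀⟩ := hq₀D
  have hmaxF : ∀ q ∈ D, F q ≤ F (x₀, y₀, t₀) := fun q hq => hq₀max hq
  by_cases hb : y₀ = 0 ∨ |x₀| = l ∨ y₀ = l ∨ t₀ = a
  · have h1 : F (x, y, t) ≤ F (x₀, y₀, t₀) := hmaxF _ ⟨abs_le.1 hx, hy, ht⟩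
    have h2 : w x₀ y₀ t₀ ≤ K := hbd _ _ _ (abs_le.2 hx₀) hy₀ ht₀ hb
    simp only [hF] at h1
    have ht' : t - t₀ ≤ b - a := by
      have := ht.2; have := ht₀.1; simp only at *; linarith
    nlinarith [mul_le_mul_of_nonneg_left ht' (le_of_lt hε')]
  · exfalso
    push_neg at hb
    obtain ⟨hb1, hb2, hb3, hb4⟩ := hb
    have hx₀' : |x₀| < l := lt_of_le_of_ne (abs_le.2 hx₀) hb2
    have hy₀' : y₀ ∈ Ioo (0:ℝ) l := ⟨lt_of_le_of_ne hy₀.1 (Ne.symm hb1), lt_of_le_of_ne hy₀.2 hb3⟩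
    have ht₀' : t₀ ∈ Ioc a b := ⟨lt_of_le_of_ne ht₀.1 (Ne.symm hb4), ht₀.2⟩
    obtain ⟨hdx, hdy, hdxx, hdyy, hdt, hpde⟩ := hint x₀ y₀ t₀ hx₀' hy₀' ht₀'
    have hnbx : ∀ᶠ s in nhds x₀, |s| < l :=
      (isOpen_lt continuous_abs continuous_const).eventually_mem hx₀'
    have hnby : ∀ᶠ s in nhds y₀, s ∈ Ioo (0:ℝ) l := isOpen_Ioo.eventually_mem hy₀'
    -- local max in x
    have hlocx : IsLocalMax (fun s => w s y₀ t₀) x₀ := by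
      filter_upwards [hnbx] with s hs
      have hm : ((s, y₀, t₀) : ℝ × ℝ × ℝ) ∈ D := ⟨abs_le.1 (le_of_lt hs), hy₀, ht₀⟩
      have := hmaxF _ hm
      simp only [hF] at this
      simpa using (by linarith : w s y₀ t₀ ≤ w x₀ y₀ t₀)
    have hlocy : IsLocalMax (fun s => w x₀ s t₀) y₀ := by
      filter_upwards [hnby] with s hs
      have hm : ((x₀, s, t₀) : ℝ × ℝ × ℝ) ∈ D := ⟨hx₀, ⟨le_of_lt hs.1, le_of_lt hs.2⟩, ht₀⟩
      have := hmaxF _ hm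
      simp only [hF] at this
      simpa using (by linarith : w x₀ s t₀ ≤ w x₀ y₀ t₀)
    have hzx : pdx w x₀ y₀ t₀ = 0 := hlocx.deriv_eq_zero
    have hzy : pdy w x₀ y₀ t₀ = 0 := hlocy.deriv_eq_zero
    have h2x : pdxx w x₀ y₀ t₀ ≤ 0 := deriv2_nonpos_of_isLocalMax hdx hdxx hlocx
    have h2y : pdyy w x₀ y₀ t₀ ≤ 0 := deriv2_nonpos_of_isLocalMax hdy hdyy hlocy
    -- time direction
    have hevt : ∀ᶠ s in nhdsWithin t₀ (Iio t₀),
        (fun s => w x₀ y₀ s - ε' * s) s ≤ (fun s => w x₀ y₀ s - ε' * s) t₀ := by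
      have hgt : ∀ᶠ s in nhdsWithin t₀ (Iio t₀), a < s :=
        (eventually_gt_nhds ht₀'.1).filter_mono nhdsWithin_le_nhds
      filter_upwards [hgt, self_mem_nhdsWithin] with s hs hs'
      simp only [mem_Iio] at hs'
      have hm : ((x₀, y₀, s) : ℝ × ℝ × ℝ) ∈ D :=
        ⟨hx₀, hy₀, ⟨le_of_lt hs, le_trans (le_of_lt hs') ht₀.2⟩⟩
      have := hmaxF _ hm
      simp only [hF] at this
      simpa using this
    have hlin : DifferentiableAt ℝ (fun s : ℝ => ε' * s) t₀ :=
      (differentiableAt_id.const_mul ε')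
    have hdG : DifferentiableAt ℝ (fun s => w x₀ y₀ s - ε' * s) t₀ := hdt.sub hlin
    have h0 : 0 ≤ deriv (fun s => w x₀ y₀ s - ε' * s) t₀ := deriv_nonneg_of_left_le hdG hevt
    have hderlin : deriv (fun s : ℝ => ε' * s) t₀ = ε' := by
      simpa using ((hasDerivAt_id t₀).const_mul ε').deriv
    have hder : deriv (fun s => w x₀ y₀ s - ε' * s) t₀ = pdt w x₀ y₀ t₀ - ε' := by
      rw [deriv_fun_sub hdt hlin, hderlin]; rfl
    have hεle : ε' ≤ pdt w x₀ y₀ t₀ := by rw [hder] at h0; linarith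
    have := hpde hzx hzy
    linarith

/-- The key Kruzhkov-type time-shift estimate:
`σ (u(x,y,t+h) - u(x,y,t)) ≤ C₁ h` on the inner box, away from the final time. -/
lemma key_shift (p L T : ℝ) (hL : 0 < L) (hT : 0 < T) (u : ℝ → ℝ → ℝ → ℝ)
    (hsol : ClassicalSolution p L T u)
    (C₁ : ℝ) (hC₁nn : 0 ≤ C₁)
    (hC₁ : ∀ x y t : ℝ, |x| ≤ L/2 → y ∈ Icc (0:ℝ) (L/2) → t ∈ Icc (T/2) T →
      (|x| = L/2 ∨ y = L/2 ∨ t ≤ 3*T/4) → |pdt u x y t| ≤ C₁)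
    (σ h η : ℝ) (hσ : σ = 1 ∨ σ = -1) (hh : 0 < h) (hh4 : h ≤ T/4) (hη : 0 < η)
    (hb : T/2 < T - h - η) :
    ∀ x y t : ℝ, |x| ≤ L/2 → y ∈ Icc (0:ℝ) (L/2) → t ∈ Icc (T/2) (T - h - η) →
      σ * (u x y (t+h) - u x y t) ≤ C₁ * h := by
  have hL2 : L/2 < L := by linarith
  have hσ0 : σ ≠ 0 := by rcases hσ with rfl | rfl <;> norm_num
  -- regularity of u at all points used below
  have hreg : ∀ x y s : ℝ, |x| ≤ L/2 → y ∈ Icc (0:ℝ) (L/2) → T/2 ≤ s → s ≤ T - η →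
      C21At u x y s := by
    intro x y s hx hy hs1 hs2
    exact hsol.smooth (le_trans hx (le_of_lt hL2))
      ⟨hy.1, le_trans hy.2 (le_of_lt hL2)⟩ ⟨by linarith, by linarith⟩
  apply maxprin (L/2) (T/2) (T - h - η) (C₁*h) hb
    (fun x y t => σ * (u x y (t+h) - u x y t))
  · -- continuity
    intro x y t hx hy ht
    have c1 : ContinuousAt (fun q : ℝ × ℝ × ℝ => u q.1 q.2.1 q.2.2) (x, y, t) :=
      (hreg x y t hx hy ht.1 (by have := ht.2; linarith)).2.2.2.2.2.2.1
    have c2 : ContinuousAt (fun q : ℝ × ℝ × ℝ => u q.1 q.2.1 q.2.2) (x, y, t+h) :=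
      (hreg x y (t+h) hx hy (by have := ht.1; linarith)
        (by have := ht.2; linarith)).2.2.2.2.2.2.1
    have cτ : ContinuousAt (fun q : ℝ × ℝ × ℝ => ((q.1, q.2.1, q.2.2 + h) : ℝ × ℝ × ℝ))
        (x, y, t) :=
      (continuous_fst.prodMk ((continuous_fst.comp continuous_snd).prodMk
        ((continuous_snd.comp continuous_snd).add continuous_const))).continuousAt
    have c3 : ContinuousAt ((fun q : ℝ × ℝ × ℝ => u q.1 q.2.1 q.2.2) ∘
        (fun q : ℝ × ℝ × ℝ => ((q.1, q.2.1, q.2.2 + h) : ℝ × ℝ × ℝ))) (x, y, t) :=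
      ContinuousAt.comp (f := fun q : ℝ × ℝ × ℝ => ((q.1, q.2.1, q.2.2 + h) : ℝ × ℝ × ℝ)) c2 cτ
    exact continuousAt_const.mul (c3.sub c1)
  · -- interior conditions
    intro x y t hx hy ht
    have hxL : |x| < L := lt_trans hx hL2
    have hyL : y ∈ Icc (0:ℝ) L := ⟨le_of_lt hy.1, le_trans (le_of_lt hy.2) (le_of_lt hL2)⟩
    have hyLo : y ∈ Ioo (0:ℝ) L := ⟨hy.1, lt_trans hy.2 hL2⟩
    have ht1 : t ∈ Ioo (0:ℝ) T := ⟨by have := ht.1; linarith, by have := ht.2; linarith⟩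
    have ht2 : t + h ∈ Ioo (0:ℝ) T := ⟨by have := ht.1; linarith, by have := ht.2; linarith⟩
    have hnbx : ∀ᶠ s in nhds x, |s| < L :=
      (isOpen_lt continuous_abs continuous_const).eventually_mem hxL
    have hnby : ∀ᶠ s in nhds y, s ∈ Ioo (0:ℝ) L := isOpen_Ioo.eventually_mem hyLo
    have hevdx : ∀ᶠ s in nhds x,
        DifferentiableAt ℝ (fun s' => σ * (u s' y (t+h) - u s' y t)) s := by
      filter_upwards [hnbx] with s hs
      exact (((hsol.smooth (le_of_lt hs) hyL ht2).1).sub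
        ((hsol.smooth (le_of_lt hs) hyL ht1).1)).const_mul σ
    have hevdy : ∀ᶠ s in nhds y,
        DifferentiableAt ℝ (fun s' => σ * (u x s' (t+h) - u x s' t)) s := by
      filter_upwards [hnby] with s hs
      exact (((hsol.smooth (le_of_lt hxL) ⟨le_of_lt hs.1, le_of_lt hs.2⟩ ht2).2.1).sub
        ((hsol.smooth (le_of_lt hxL) ⟨le_of_lt hs.1, le_of_lt hs.2⟩ ht1).2.1)).const_mul σ
    -- identity for pdx of w near x
    have hevxid : (fun s => pdx (fun x y t => σ * (u x y (t+h) - u x y t)) s y t)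
        =ᶠ[nhds x] (fun s => σ * (pdx u s y (t+h) - pdx u s y t)) := by
      filter_upwards [hnbx] with s hs
      have d1 : DifferentiableAt ℝ (fun s' => u s' y (t+h)) s :=
        (hsol.smooth (le_of_lt hs) hyL ht2).1
      have d2 : DifferentiableAt ℝ (fun s' => u s' y t) s :=
        (hsol.smooth (le_of_lt hs) hyL ht1).1
      show deriv (fun s' => σ * (u s' y (t+h) - u s' y t)) s = _
      rw [deriv_const_mul σ (d1.fun_sub d2), deriv_fun_sub d1 d2]
      rfl
    have hevyid : (fun s => pdy (fun x y t => σ * (u x y (t+h) - u x y t)) x s t)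
        =ᶠ[nhds y] (fun s => σ * (pdy u x s (t+h) - pdy u x s t)) := by
      filter_upwards [hnby] with s hs
      have d1 : DifferentiableAt ℝ (fun s' => u x s' (t+h)) s :=
        (hsol.smooth (le_of_lt hxL) ⟨le_of_lt hs.1, le_of_lt hs.2⟩ ht2).2.1
      have d2 : DifferentiableAt ℝ (fun s' => u x s' t) s :=
        (hsol.smooth (le_of_lt hxL) ⟨le_of_lt hs.1, le_of_lt hs.2⟩ ht1).2.1
      show deriv (fun s' => σ * (u x s' (t+h) - u x s' t)) s = _
      rw [deriv_const_mul σ (d1.fun_sub d2), deriv_fun_sub d1 d2]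
      rfl
    have dpdx1 : DifferentiableAt ℝ (fun s => pdx u s y (t+h)) x :=
      (hsol.smooth (le_of_lt hxL) hyL ht2).2.2.2.1
    have dpdx2 : DifferentiableAt ℝ (fun s => pdx u s y t) x :=
      (hsol.smooth (le_of_lt hxL) hyL ht1).2.2.2.1
    have dpdy1 : DifferentiableAt ℝ (fun s => pdy u x s (t+h)) y :=
      (hsol.smooth (le_of_lt hxL) hyL ht2).2.2.2.2.1
    have dpdy2 : DifferentiableAt ℝ (fun s => pdy u x s t) y :=
      (hsol.smooth (le_of_lt hxL) hyL ht1).2.2.2.2.1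
    have douter : DifferentiableAt ℝ (fun r => u x y r) (t+h) :=
      (hsol.smooth (le_of_lt hxL) hyL ht2).2.2.1
    have dinner : DifferentiableAt ℝ (fun r => u x y r) t :=
      (hsol.smooth (le_of_lt hxL) hyL ht1).2.2.1
    have dshift : DifferentiableAt ℝ (fun s => u x y (s+h)) t :=
      douter.comp t (differentiableAt_id.add_const h)
    refine ⟨hevdx, hevdy, ?_, ?_, ?_, ?_⟩
    · exact hevxid.differentiableAt_iff.2 ((dpdx1.sub dpdx2).const_mul σ)
    · exact hevyid.differentiableAt_iff.2 ((dpdy1.sub dpdy2).const_mul σ)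
    · exact (dshift.sub dinner).const_mul σ
    · -- the PDE comparison at a point with vanishing spatial gradient
      intro hx0 hy0
      have e1 : pdx (fun x y t => σ * (u x y (t+h) - u x y t)) x y t
          = σ * (pdx u x y (t+h) - pdx u x y t) := hevxid.eq_of_nhds
      have e2 : pdy (fun x y t => σ * (u x y (t+h) - u x y t)) x y t
          = σ * (pdy u x y (t+h) - pdy u x y t) := hevyid.eq_of_nhds
      have epdx : pdx u x y (t+h) = pdx u x y t := by
        have h0 : σ * (pdx u x y (t+h) - pdx u x y t) = 0 := by rw [← e1, hx0]
        rcases mul_eq_zero.1 h0 with h' | h'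
        · exact absurd h' hσ0
        · linarith [sub_eq_zero.1 h']
      have epdy : pdy u x y (t+h) = pdy u x y t := by
        have h0 : σ * (pdy u x y (t+h) - pdy u x y t) = 0 := by rw [← e2, hy0]
        rcases mul_eq_zero.1 h0 with h' | h'
        · exact absurd h' hσ0
        · linarith [sub_eq_zero.1 h']
      have egrad : gradNorm u x y (t+h) = gradNorm u x y t := by
        unfold gradNorm
        rw [epdx, epdy]
      have pde1 := hsol.pde hxL hyLo ht1
      have pde2 := hsol.pde hxL hyLo ht2
      rw [egrad] at pde2
      have ept : pdt (fun x y t => σ * (u x y (t+h) - u x y t)) x y t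
          = σ * (pdt u x y (t+h) - pdt u x y t) := by
        show deriv (fun s => σ * (u x y (s+h) - u x y s)) t = _
        rw [deriv_const_mul σ (dshift.fun_sub dinner), deriv_fun_sub dshift dinner,
          deriv_comp_add_const (fun r => u x y r) h t]
        rfl
      have exx : pdxx (fun x y t => σ * (u x y (t+h) - u x y t)) x y t
          = σ * (pdxx u x y (t+h) - pdxx u x y t) := by
        show deriv (fun s => pdx (fun x y t => σ * (u x y (t+h) - u x y t)) s y t) x = _
        rw [hevxid.deriv_eq, deriv_const_mul σ (dpdx1.fun_sub dpdx2), deriv_fun_sub dpdx1 dpdx2]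
        rfl
      have eyy : pdyy (fun x y t => σ * (u x y (t+h) - u x y t)) x y t
          = σ * (pdyy u x y (t+h) - pdyy u x y t) := by
        show deriv (fun s => pdy (fun x y t => σ * (u x y (t+h) - u x y t)) x s t) y = _
        rw [hevyid.deriv_eq, deriv_const_mul σ (dpdy1.fun_sub dpdy2), deriv_fun_sub dpdy1 dpdy2]
        rfl
      rw [ept, exx, eyy]
      rcases hσ with rfl | rfl <;> nlinarith [pde1, pde2]
  · -- boundary estimate
    intro x y t hx hy ht hcase
    have hxL : |x| < L := lt_of_le_of_lt hx hL2
    have hCh : 0 ≤ C₁ * h := mul_nonneg hC₁nn hh.le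
    rcases hcase with h0 | hcase
    · subst h0
      rw [hsol.bc hxL (⟨by have := ht.1; linarith, by have := ht.2; linarith⟩ : t + h ∈ Ioo 0 T),
        hsol.bc hxL (⟨by have := ht.1; linarith, by have := ht.2; linarith⟩ : t ∈ Ioo 0 T)]
      simpa using hCh
    · have hth : t < t + h := by linarith
      have hcont : ContinuousOn (fun s => u x y s) (Icc t (t+h)) := by
        intro s hs
        exact ((hreg x y s hx hy (le_trans ht.1 hs.1)
          (by have := ht.2; have := hs.2; linarith)).2.2.1).continuousAt.continuousWithinAt
      have hderiv : ∀ s ∈ Ioo t (t+h), HasDerivAt (fun s => u x y s) (pdt u x y s) s := by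
        intro s hs
        exact ((hreg x y s hx hy (le_trans ht.1 hs.1.le)
          (by have := ht.2; have := hs.2; linarith)).2.2.1).hasDerivAt
      obtain ⟨ξ, hξ, hslope⟩ := exists_hasDerivAt_eq_slope (fun s => u x y s)
        (fun s => pdt u x y s) hth hcont hderiv
      have hΔ : u x y (t+h) - u x y t = pdt u x y ξ * h := by
        have harith : t + h - t = h := by ring
        rw [harith] at hslope
        rw [eq_div_iff (ne_of_gt hh)] at hslope
        linarith [hslope]
      have hξmem : ξ ∈ Icc (T/2) T :=
        ⟨le_trans ht.1 hξ.1.le, by have := hξ.2; have := ht.2; linarith⟩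
      have hside : |x| = L/2 ∨ y = L/2 ∨ ξ ≤ 3*T/4 := by
        rcases hcase with h' | h' | h'
        · exact Or.inl h'
        · exact Or.inr (Or.inl h')
        · right; right
          have h2 := hξ.2
          rw [h'] at h2
          linarith
      have hbnd := hC₁ x y ξ hx hy hξmem hside
      calc σ * (u x y (t+h) - u x y t) ≤ |u x y (t+h) - u x y t| := by
            rcases hσ with rfl | rfl
            · simpa using le_abs_self (u x y (t+h) - u x y t)
            · nlinarith [neg_abs_le (u x y (t+h) - u x y t)]
        _ = |pdt u x y ξ| * h := by rw [hΔ, abs_mul, abs_of_pos hh]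
        _ ≤ C₁ * h := mul_le_mul_of_nonneg_right hbnd hh.le
/-- `u` has an isolated gradient blow-up point at `(0,0,T)`:
`limsup |∇u| = ∞` at `(0,0,T)` while `∇u` stays bounded on `K × (0,T)` for every
compact `K ⊆ ω̄ \ {(0,0)}`. -/
structure IsolatedGBU (L T : ℝ) (u : ℝ → ℝ → ℝ → ℝ) : Prop where
  blowup : ∀ M : ℝ, ∀ δ > (0:ℝ), ∃ x y t : ℝ, |x| ≤ L ∧ y ∈ Icc (0:ℝ) L ∧
    t ∈ Ioo 0 T ∧ |x| < δ ∧ |y| < δ ∧ T - δ < t ∧ M < gradNorm u x y t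
  bounded : ∀ K : Set (ℝ × ℝ), IsCompact K →
    K ⊆ (Icc (-L) L ×ˢ Icc (0:ℝ) L) \ {((0:ℝ), (0:ℝ))} →
    ∃ M : ℝ, ∀ q ∈ K, ∀ t ∈ Ioo (0:ℝ) T, gradNorm u q.1 q.2 t ≤ M

/-- `u` extends as a `C^{2,1}` function to `(ω̄' × [T/2,T]) \ {(0,0,T)}`,
`ω' = (-L/2,L/2) × (0,L/2)`; values and derivatives at `t = T` refer to this extension. -/
def ExtC21 (L T : ℝ) (u : ℝ → ℝ → ℝ → ℝ) : Prop :=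
  ∀ ⦃x y t : ℝ⦄, |x| ≤ L / 2 → y ∈ Icc (0:ℝ) (L / 2) → t ∈ Icc (T / 2) T →
    ¬(x = 0 ∧ y = 0 ∧ t = T) → C21At u x y t

/-- The monotonicity condition `x·u_x ≤ 0` in `Q_T`. -/
def MonCond (L T : ℝ) (u : ℝ → ℝ → ℝ → ℝ) : Prop :=
  ∀ ⦃x y t : ℝ⦄, |x| < L → y ∈ Ioo (0:ℝ) L → t ∈ Ioo 0 T → x * pdx u x y t ≤ 0

/-- Proposition 2.2 (i): the time derivative is bounded on
`Q̃ = (ω̄' × [T/2,T]) \ {(0,0,T)}`. -/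
theorem ut_bounded (p L T : ℝ) (hp : 2 < p) (hL : 0 < L) (hT : 0 < T)
    (u : ℝ → ℝ → ℝ → ℝ)
    (hsol : ClassicalSolution p L T u) (hgbu : IsolatedGBU L T u)
    (hext : ExtC21 L T u) :
    ∃ C : ℝ, 0 < C ∧ ∀ x y t : ℝ, |x| ≤ L/2 → y ∈ Icc (0:ℝ) (L/2) →
      t ∈ Icc (T/2) T → ¬(x = 0 ∧ y = 0 ∧ t = T) → |pdt u x y t| ≤ C := by
  
  have hL2 : (0:ℝ) < L/2 := by linarith
  -- a compact subset of Q̃, away from the singular point, containing the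
  -- parabolic boundary region used in the time-shift argument
  set Sfar : Set (ℝ × ℝ × ℝ) :=
    (Icc (-(L/2)) (L/2) ×ˢ Icc (0:ℝ) (L/2) ×ˢ Icc (T/2) T) ∩
      ({q : ℝ × ℝ × ℝ | |q.1| = L/2} ∪ {q : ℝ × ℝ × ℝ | q.2.1 = L/2} ∪
        {q : ℝ × ℝ × ℝ | q.2.2 ≤ 3*T/4}) with hSdef
  have hSc : IsCompact Sfar := by
    apply IsCompact.inter_right (isCompact_Icc.prod (isCompact_Icc.prod isCompact_Icc))
    exact ((isClosed_eq (continuous_abs.comp continuous_fst) continuous_const).union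
      (isClosed_eq (continuous_fst.comp continuous_snd) continuous_const)).union
      (isClosed_le (continuous_snd.comp continuous_snd) continuous_const)
  have hScont : ContinuousOn (fun q : ℝ × ℝ × ℝ => pdt u q.1 q.2.1 q.2.2) Sfar := by
    intro q hq
    obtain ⟨⟨hq1, hq2, hq3⟩, hq4⟩ := hq
    have hne : ¬(q.1 = 0 ∧ q.2.1 = 0 ∧ q.2.2 = T) := by
      rintro ⟨e1, e2, e3⟩
      rcases hq4 with (h' | h') | h'
      · simp only [Set.mem_setOf_eq] at h'; rw [e1] at h'; simp at h'; linarith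
      · simp only [Set.mem_setOf_eq] at h'; rw [e2] at h'; linarith
      · simp only [Set.mem_setOf_eq] at h'; rw [e3] at h'; linarith
    exact ((hext (abs_le.2 hq1) hq2 hq3 hne).2.2.2.2.2.2.2.2.2.1).continuousWithinAt
  obtain ⟨C₀, hC₀⟩ := hSc.exists_bound_of_continuousOn hScont
  set C₁ : ℝ := max C₀ 0 with hC₁def
  have hC₁nn : 0 ≤ C₁ := le_max_right _ _
  have hC₁ : ∀ x y t : ℝ, |x| ≤ L/2 → y ∈ Icc (0:ℝ) (L/2) → t ∈ Icc (T/2) T →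
      (|x| = L/2 ∨ y = L/2 ∨ t ≤ 3*T/4) → |pdt u x y t| ≤ C₁ := by
    intro x y t hx hy ht hside
    have hmem : ((x, y, t) : ℝ × ℝ × ℝ) ∈ Sfar := by
      refine ⟨⟨abs_le.1 hx, hy, ht⟩, ?_⟩
      rcases hside with h' | h' | h'
      · exact Or.inl (Or.inl h')
      · exact Or.inl (Or.inr h')
      · exact Or.inr h'
    have := hC₀ _ hmem
    rw [Real.norm_eq_abs] at this
    exact le_trans this (le_max_left _ _)
  -- the bound for times strictly before T, via the time-shift estimate
  have hint : ∀ x y t : ℝ, |x| ≤ L/2 → y ∈ Icc (0:ℝ) (L/2) → t ∈ Icc (T/2) T → t < T →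
      |pdt u x y t| ≤ C₁ := by
    intro x y t hx hy ht htT
    have hdiff : DifferentiableAt ℝ (fun s => u x y s) t :=
      (hsol.smooth (le_trans hx (by linarith)) ⟨hy.1, le_trans hy.2 (by linarith)⟩
        ⟨by linarith [ht.1], htT⟩).2.2.1
    have hslope : Tendsto (slope (fun s => u x y s) t) (nhdsWithin t {t}ᶜ)
        (nhds (pdt u x y t)) := hasDerivAt_iff_tendsto_slope.1 hdiff.hasDerivAt
    have hmono : nhdsWithin t (Ioi t) ≤ nhdsWithin t {t}ᶜ :=
      nhdsWithin_mono _ (fun s hs => ne_of_gt hs)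
    have hs' : Tendsto (slope (fun s => u x y s) t) (nhdsWithin t (Ioi t))
        (nhds (pdt u x y t)) := hslope.mono_left hmono
    have hev : ∀ᶠ s in nhdsWithin t (Ioi t), |slope (fun s => u x y s) t s| ≤ C₁ := by
      have hevm : ∀ᶠ s in nhdsWithin t (Ioi t), s < t + (T-t)/2 :=
        (eventually_lt_nhds (show t < t + (T-t)/2 by linarith)).filter_mono nhdsWithin_le_nhds
      filter_upwards [hevm, self_mem_nhdsWithin] with s hs1 hs2
      simp only [mem_Ioi] at hs2
      have hst : 0 < s - t := by linarith
      have h1 : t ≥ T/2 := ht.1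
      have k1 := key_shift p L T hL hT u hsol C₁ hC₁nn hC₁ 1 (s - t) ((T - s)/2)
        (Or.inl rfl) hst (by linarith) (by linarith) (by linarith) x y t hx hy
        ⟨ht.1, by linarith⟩
      have k2 := key_shift p L T hL hT u hsol C₁ hC₁nn hC₁ (-1) (s - t) ((T - s)/2)
        (Or.inr rfl) hst (by linarith) (by linarith) (by linarith) x y t hx hy
        ⟨ht.1, by linarith⟩
      have hts : t + (s - t) = s := by ring
      rw [hts] at k1 k2
      rw [slope_def_field, abs_div, abs_of_pos hst, div_le_iff₀ hst]
      have habs : |u x y s - u x y t| ≤ C₁ * (s - t) := by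
        apply abs_le.2
        constructor
        · linarith [k2]
        · linarith [k1]
      linarith [habs]
    exact le_of_tendsto hs'.abs hev
  refine ⟨C₁ + 1, by linarith, ?_⟩
  intro x y t hx hy ht hne
  rcases lt_or_eq_of_le ht.2 with htT | htT
  · have := hint x y t hx hy ht htT
    linarith
  · subst htT
    have hcont : ContinuousAt (fun q : ℝ × ℝ × ℝ => pdt u q.1 q.2.1 q.2.2) (x, y, t) :=
      (hext hx hy ht hne).2.2.2.2.2.2.2.2.2.1
    have htt : Tendsto (fun s : ℝ => ((x, y, s) : ℝ × ℝ × ℝ)) (nhdsWithin t (Iio t))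
        (nhds (x, y, t)) :=
      ((continuous_const.prodMk (continuous_const.prodMk continuous_id)).tendsto t).mono_left
        nhdsWithin_le_nhds
    have h2 : Tendsto (fun s => pdt u x y s) (nhdsWithin t (Iio t)) (nhds (pdt u x y t)) :=
      hcont.tendsto.comp htt
    have hev : ∀ᶠ s in nhdsWithin t (Iio t), |pdt u x y s| ≤ C₁ := by
      have hgt : ∀ᶠ s in nhdsWithin t (Iio t), t/2 < s :=
        (eventually_gt_nhds (show t/2 < t by linarith)).filter_mono nhdsWithin_le_nhds
      filter_upwards [hgt, self_mem_nhdsWithin] with s hs1 hs2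
      simp only [mem_Iio] at hs2
      exact hint x y s hx hy ⟨le_of_lt hs1, by linarith⟩ (by linarith)
    have := le_of_tendsto h2.abs hev
    linarith
end
end

section
/- Let p>2, let u be a nonnegative classical solution of u_t−Δu=|∇u|^p in Q_T with u=0 on Γ_T, having an isolated gradient blowup point at (0,0,T). Then there exists a constant C>0 (possibly depending on u) such that u_y ≥ −C on Q̃:=(ω̄'×[T/2,T])∖{(0,0,T)}. -/
open Real Set Filter MeasureTheory

noncomputable section

open Topology

lemma deriv_nonpos_of_left_min {f : ℝ → ℝ} {a t0 c : ℝ} (h : a < t0)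
    (hmin : ∀ t ∈ Set.Icc a t0, f t0 ≤ f t) (hf : HasDerivAt f c t0) : c ≤ 0 := by
  have hs : Tendsto (slope f t0) (𝓝[<] t0) (𝓝 c) :=
    (hasDerivAt_iff_tendsto_slope.mp hf).mono_left
      (nhdsWithin_mono _ fun x hx => ne_of_lt hx)
  refine le_of_tendsto hs ?_
  filter_upwards [Ioo_mem_nhdsLT_of_mem (⟨h, le_refl t0⟩ : t0 ∈ Set.Ioc a t0)] with t ht
  have h1 : f t0 ≤ f t := hmin t ⟨le_of_lt ht.1, le_of_lt ht.2⟩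
  rw [slope_def_field]
  apply div_nonpos_of_nonneg_of_nonpos <;> linarith [ht.2]

lemma le_deriv_of_forward {f : ℝ → ℝ} {y c m h0 : ℝ} (hh0 : 0 < h0)
    (hf : HasDerivAt f c y) (hq : ∀ h : ℝ, 0 < h → h < h0 → m ≤ (f (y + h) - f y) / h) :
    m ≤ c := by
  have hs : Tendsto (slope f y) (𝓝[>] y) (𝓝 c) :=
    (hasDerivAt_iff_tendsto_slope.mp hf).mono_left
      (nhdsWithin_mono _ fun x hx => ne_of_gt hx)
  refine ge_of_tendsto hs ?_
  filter_upwards [Ioo_mem_nhdsGT_of_mem (⟨le_refl y, by linarith⟩ : y ∈ Set.Ico y (y + h0))]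
    with t ht
  have h1 := hq (t - y) (by linarith [ht.1]) (by linarith [ht.2])
  rw [slope_def_field]
  have h2 : y + (t - y) = t := by ring
  rw [h2] at h1
  exact h1

lemma interior_min_facts {f ψ : ℝ → ℝ} {x0 δ c : ℝ} (hδ : 0 < δ)
    (hmin : ∀ x ∈ Set.Ioo (x0 - δ) (x0 + δ), f x0 ≤ f x)
    (hψ : ∀ x ∈ Set.Ioo (x0 - δ) (x0 + δ), HasDerivAt f (ψ x) x)
    (hc : HasDerivAt ψ c x0) : ψ x0 = 0 ∧ 0 ≤ c := by
  have hx0mem : x0 ∈ Set.Ioo (x0 - δ) (x0 + δ) := ⟨by linarith, by linarith⟩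
  have hnhds : Set.Ioo (x0 - δ) (x0 + δ) ∈ 𝓝 x0 := Ioo_mem_nhds (by linarith) (by linarith)
  have hloc : IsLocalMin f x0 := by filter_upwards [hnhds] with x hx using hmin x hx
  have hψ0 : ψ x0 = 0 := by
    have h1 := hloc.deriv_eq_zero
    rw [← (hψ x0 hx0mem).deriv]
    exact h1
  refine ⟨hψ0, ?_⟩
  by_contra hcneg
  push_neg at hcneg
  have hs : Tendsto (slope ψ x0) (𝓝[>] x0) (𝓝 c) :=
    (hasDerivAt_iff_tendsto_slope.mp hc).mono_left
      (nhdsWithin_mono _ fun x hx => ne_of_gt hx)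
  have hev : ∀ᶠ t in 𝓝[>] x0, slope ψ x0 t < 0 := hs.eventually_lt_const hcneg
  obtain ⟨u0, hu0, hsub⟩ := mem_nhdsGT_iff_exists_Ioo_subset.mp hev
  have hu0' : x0 < u0 := hu0
  set x3 := x0 + min (u0 - x0) δ / 2 with hx3def
  have hmpos : 0 < min (u0 - x0) δ := lt_min (by linarith) hδ
  have hx3a : x0 < x3 := by simp only [hx3def]; linarith
  have hx3b : x3 < u0 := by
    have : min (u0 - x0) δ ≤ u0 - x0 := min_le_left _ _
    simp only [hx3def]; linarith
  have hx3c : x3 < x0 + δ := by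
    have : min (u0 - x0) δ ≤ δ := min_le_right _ _
    simp only [hx3def]; linarith
  have hsubI : Set.Icc x0 x3 ⊆ Set.Ioo (x0 - δ) (x0 + δ) := by
    intro x hx
    exact ⟨by linarith [hx.1], by linarith [hx.2]⟩
  have hcont : ContinuousOn f (Set.Icc x0 x3) := fun x hx =>
    ((hψ x (hsubI hx)).continuousAt).continuousWithinAt
  have hderiv : ∀ x ∈ Set.Ioo x0 x3, HasDerivAt f (ψ x) x := fun x hx =>
    hψ x (hsubI ⟨le_of_lt hx.1, le_of_lt hx.2⟩)
  obtain ⟨ξ, hξ, hξeq⟩ := exists_hasDerivAt_eq_slope f ψ hx3a hcont hderiv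
  have hslopeξ : slope ψ x0 ξ < 0 := hsub ⟨hξ.1, lt_trans hξ.2 hx3b⟩
  rw [slope_def_field, hψ0, sub_zero] at hslopeξ
  have hξpos : 0 < ξ - x0 := by linarith [hξ.1]
  have hψξ : ψ ξ < 0 := by
    by_contra hge
    push_neg at hge
    have := div_nonneg hge (le_of_lt hξpos)
    linarith
  have h3 : f x0 ≤ f x3 := hmin x3 (hsubI ⟨le_of_lt hx3a, le_refl x3⟩)
  rw [hξeq] at hψξ
  have : 0 ≤ (f x3 - f x0) / (x3 - x0) := div_nonneg (by linarith) (by linarith)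
  linarith

/-- `pdy` is bounded below by `-gradNorm`. -/
lemma neg_gradNorm_le_pdy (u : ℝ → ℝ → ℝ → ℝ) (x y t : ℝ) :
    -(gradNorm u x y t) ≤ pdy u x y t := by
  have h1 : |pdy u x y t| ≤ gradNorm u x y t := by
    rw [gradNorm]
    have h2 : (pdy u x y t) ^ 2 ≤ (pdx u x y t) ^ 2 + (pdy u x y t) ^ 2 := by nlinarith [sq_nonneg (pdx u x y t)]
    have := Real.sqrt_le_sqrt h2
    rwa [Real.sqrt_sq_eq_abs] at this
  linarith [neg_abs_le (pdy u x y t)]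
set_option maxHeartbeats 2000000

/-- Proposition 2.2 (ii): `u_y ≥ -C` on `Q̃ = (ω̄' × [T/2,T]) \ {(0,0,T)}`. -/
theorem uy_lower_bound (p L T : ℝ) (hp : 2 < p) (hL : 0 < L) (hT : 0 < T)
    (u : ℝ → ℝ → ℝ → ℝ)
    (hsol : ClassicalSolution p L T u) (hgbu : IsolatedGBU L T u)
    (hext : ExtC21 L T u) :
    ∃ C : ℝ, 0 < C ∧ ∀ x y t : ℝ, |x| ≤ L/2 → y ∈ Icc (0:ℝ) (L/2) →
      t ∈ Icc (T/2) T → ¬(x = 0 ∧ y = 0 ∧ t = T) → -C ≤ pdy u x y t := by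
  classical
  have hT2 : (0:ℝ) < T/2 := by linarith
  -- a compact set avoiding the origin, containing the lateral and top boundaries
  set K : Set (ℝ × ℝ) :=
    (Icc (-(L/2)) (L/2) ×ˢ Icc (0:ℝ) L) \ (Ioo (-(L/2)) (L/2) ×ˢ Iio (3*L/4)) with hKdef
  have hKcomp : IsCompact K :=
    (isCompact_Icc.prod isCompact_Icc).diff (isOpen_Ioo.prod isOpen_Iio)
  have hKsub : K ⊆ (Icc (-L) L ×ˢ Icc (0:ℝ) L) \ {((0:ℝ), (0:ℝ))} := by
    rintro ⟨a, b⟩ ⟨⟨ha, hb⟩, hnot⟩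
    simp only [Set.mem_Icc] at ha hb
    constructor
    · exact ⟨Set.mem_Icc.mpr ⟨by linarith [ha.1], by linarith [ha.2]⟩, hb⟩
    · simp only [Set.mem_singleton_iff]
      intro h0
      apply hnot
      rw [h0]
      exact ⟨Set.mem_Ioo.mpr ⟨by linarith, by linarith⟩, Set.mem_Iio.mpr (by linarith)⟩
  obtain ⟨M₁, hM₁⟩ := hgbu.bounded K hKcomp hKsub
  -- bound on the gradient on the bottom slice t = T/2
  have hTmem : T/2 ∈ Ioo (0:ℝ) T := ⟨hT2, by linarith⟩
  have hSliceCont : ContinuousOn (fun q : ℝ × ℝ => gradNorm u q.1 q.2 (T/2))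
      (Icc (-(L/2)) (L/2) ×ˢ Icc (0:ℝ) L) := by
    intro q hq
    obtain ⟨hq1, hq2⟩ := hq
    simp only [Set.mem_Icc] at hq1 hq2
    have hqx : |q.1| ≤ L := abs_le.mpr ⟨by linarith [hq1.1], by linarith [hq1.2]⟩
    have hsm := hsol.smooth hqx (Set.mem_Icc.mpr hq2) hTmem
    have hinner : ContinuousAt (fun q : ℝ × ℝ => ((q.1, q.2, T/2) : ℝ × ℝ × ℝ)) q :=
      (continuous_fst.prodMk (continuous_snd.prodMk continuous_const)).continuousAt
    have hpx : ContinuousAt (fun q : ℝ × ℝ => pdx u q.1 q.2 (T/2)) q :=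
      ContinuousAt.comp (f := fun q : ℝ × ℝ => ((q.1, q.2, T/2) : ℝ × ℝ × ℝ))
        hsm.2.2.2.2.2.2.2.1 hinner
    have hpy : ContinuousAt (fun q : ℝ × ℝ => pdy u q.1 q.2 (T/2)) q :=
      ContinuousAt.comp (f := fun q : ℝ × ℝ => ((q.1, q.2, T/2) : ℝ × ℝ × ℝ))
        hsm.2.2.2.2.2.2.2.2.1 hinner
    have : ContinuousAt (fun q : ℝ × ℝ =>
        Real.sqrt ((pdx u q.1 q.2 (T/2)) ^ 2 + (pdy u q.1 q.2 (T/2)) ^ 2)) q :=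
      Real.continuous_sqrt.continuousAt.comp ((hpx.pow 2).add (hpy.pow 2))
    exact this.continuousWithinAt
  obtain ⟨C0, hC0⟩ :=
    (isCompact_Icc.prod isCompact_Icc).exists_bound_of_continuousOn hSliceCont
  set M' : ℝ := max M₁ (max C0 0) with hM'def
  have hM'0 : 0 ≤ M' := le_trans (le_max_right C0 0) (le_max_right M₁ _)
  have hC0M : C0 ≤ M' := le_trans (le_max_left C0 0) (le_max_right M₁ _)
  have hM₁M : M₁ ≤ M' := le_max_left _ _
  -- the minimum principle for the finite difference in y
  have minp : ∀ ε' : ℝ, 0 < ε' → ∀ h : ℝ, 0 < h → h < L/4 → ∀ τ : ℝ, T/2 < τ → τ < T →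
      ∀ x y t : ℝ, x ∈ Icc (-(L/2)) (L/2) → y ∈ Icc (0:ℝ) (3*L/4) → t ∈ Icc (T/2) τ →
      -(M'*h) + ε'*(T/2) ≤ u x (y+h) t - u x y t + ε'*t := by
    intro ε' hε' h hh hh4 τ hτ1 hτ2 x y t hx hy ht
    set S : Set (ℝ×ℝ×ℝ) := Icc (-(L/2)) (L/2) ×ˢ Icc (0:ℝ) (3*L/4) ×ˢ Icc (T/2) τ with hSdef
    set Z : ℝ×ℝ×ℝ → ℝ :=
      fun q => u q.1 (q.2.1+h) q.2.2 - u q.1 q.2.1 q.2.2 + ε'*q.2.2 with hZdef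
    have hScomp : IsCompact S := isCompact_Icc.prod (isCompact_Icc.prod isCompact_Icc)
    have hSne : S.Nonempty := by
      refine ⟨(0, 0, T/2), ?_⟩
      simp only [hSdef, Set.mem_prod, Set.mem_Icc]
      exact ⟨⟨by linarith, by linarith⟩, ⟨le_refl 0, by linarith⟩, le_refl _, le_of_lt hτ1⟩
    have hmemS : ∀ q : ℝ×ℝ×ℝ, q ∈ S →
        |q.1| ≤ L/2 ∧ 0 ≤ q.2.1 ∧ q.2.1 ≤ 3*L/4 ∧ T/2 ≤ q.2.2 ∧ q.2.2 ≤ τ := by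
      intro q hq
      simp only [hSdef, Set.mem_prod, Set.mem_Icc] at hq
      exact ⟨abs_le.mpr ⟨hq.1.1, hq.1.2⟩, hq.2.1.1, hq.2.1.2, hq.2.2.1, hq.2.2.2⟩
    have hZcont : ContinuousOn Z S := by
      intro q hq
      obtain ⟨hq1, hq2a, hq2b, hq3a, hq3b⟩ := hmemS q hq
      have hx1 : |q.1| ≤ L := le_trans hq1 (by linarith)
      have htmem : q.2.2 ∈ Ioo (0:ℝ) T := ⟨by linarith, by linarith⟩
      have c1 := hsol.smooth hx1 (Set.mem_Icc.mpr ⟨by linarith, by linarith⟩ :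
        q.2.1 + h ∈ Icc (0:ℝ) L) htmem
      have c2 := hsol.smooth hx1 (Set.mem_Icc.mpr ⟨hq2a, by linarith⟩ :
        q.2.1 ∈ Icc (0:ℝ) L) htmem
      have hinner1 : ContinuousAt
          (fun q : ℝ×ℝ×ℝ => ((q.1, q.2.1 + h, q.2.2) : ℝ×ℝ×ℝ)) q := by
        exact (continuous_fst.prodMk (((continuous_fst.comp continuous_snd).add
          continuous_const).prodMk (continuous_snd.comp continuous_snd))).continuousAt
      have hu1 : ContinuousAt (fun q : ℝ×ℝ×ℝ => u q.1 (q.2.1 + h) q.2.2) q :=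
        ContinuousAt.comp (f := fun q : ℝ×ℝ×ℝ => ((q.1, q.2.1 + h, q.2.2) : ℝ×ℝ×ℝ))
          c1.2.2.2.2.2.2.1 hinner1
      have hu2 : ContinuousAt (fun q : ℝ×ℝ×ℝ => u q.1 q.2.1 q.2.2) q := c2.2.2.2.2.2.2.1
      have : ContinuousAt Z q :=
        (hu1.sub hu2).add ((continuous_const.mul
          (continuous_snd.comp continuous_snd)).continuousAt)
      exact this.continuousWithinAt
    obtain ⟨⟨x0, y0, t0⟩, hq0S, hq0min⟩ := hScomp.exists_isMinOn hSne hZcont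
    obtain ⟨hx0, hy0a, hy0b, ht0a, ht0b⟩ := hmemS (x0, y0, t0) hq0S
    have t0mem : t0 ∈ Ioo (0:ℝ) T := ⟨by linarith, by linarith⟩
    have hx0L : |x0| ≤ L := le_trans hx0 (by linarith)
    have hqmem : ((x, y, t) : ℝ×ℝ×ℝ) ∈ S := by
      simp only [hSdef, Set.mem_prod]
      exact ⟨hx, hy, ht⟩
    suffices hZ0 : -(M'*h) + ε'*(T/2) ≤ Z (x0, y0, t0) by
      exact le_trans hZ0 (isMinOn_iff.mp hq0min (x, y, t) hqmem)
    have hMh : 0 ≤ M'*h := mul_nonneg hM'0 hh.le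
    have hεt : ε'*(T/2) ≤ ε'*t0 := mul_le_mul_of_nonneg_left ht0a (le_of_lt hε')
    by_cases hy00 : y0 = 0
    · -- bottom boundary y = 0
      subst hy00
      show -(M'*h) + ε'*(T/2) ≤ u x0 (0+h) t0 - u x0 0 t0 + ε'*t0
      have hbc : u x0 0 t0 = 0 := hsol.bc (lt_of_le_of_lt hx0 (by linarith)) t0mem
      have hnn : 0 ≤ u x0 (0+h) t0 :=
        hsol.nonneg hx0L (Set.mem_Icc.mpr ⟨by linarith, by linarith⟩) t0mem
      rw [hbc]
      linarith
    by_cases hbd : |x0| = L/2 ∨ y0 = 3*L/4 ∨ t0 = T/2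
    · -- lateral / top / initial boundary: mean value theorem
      have hseg : ∀ s ∈ Icc y0 (y0+h), gradNorm u x0 s t0 ≤ M' := by
        intro s hs
        obtain ⟨hs1, hs2⟩ := hs
        have hs0 : 0 ≤ s := le_trans hy0a hs1
        have hsL : s ≤ L := by linarith
        rcases hbd with h1 | h1 | h1
        · refine le_trans (hM₁ (x0, s) ⟨⟨Set.mem_Icc.mpr (abs_le.mp hx0),
            Set.mem_Icc.mpr ⟨hs0, hsL⟩⟩, ?_⟩ t0 t0mem) hM₁M
          rintro ⟨hcx, -⟩
          simp only [Set.mem_Ioo] at hcx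
          have : |x0| < L/2 := abs_lt.mpr hcx
          linarith [this, h1.ge, h1.le]
        · refine le_trans (hM₁ (x0, s) ⟨⟨Set.mem_Icc.mpr (abs_le.mp hx0),
            Set.mem_Icc.mpr ⟨hs0, hsL⟩⟩, ?_⟩ t0 t0mem) hM₁M
          rintro ⟨-, hcy⟩
          simp only [Set.mem_Iio] at hcy
          linarith [hs1, h1.le]
        · have hb := hC0 (x0, s) ⟨Set.mem_Icc.mpr (abs_le.mp hx0),
            Set.mem_Icc.mpr ⟨hs0, hsL⟩⟩
          rw [Real.norm_eq_abs] at hb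
          have hgn : 0 ≤ gradNorm u x0 s (T/2) := Real.sqrt_nonneg _
          rw [abs_of_nonneg hgn] at hb
          rw [h1]
          exact le_trans hb hC0M
      have hcont2 : ContinuousOn (fun s => u x0 s t0) (Icc y0 (y0+h)) := by
        intro s hs
        exact ((hsol.smooth hx0L (Set.mem_Icc.mpr ⟨le_trans hy0a hs.1, by
          linarith [hs.2]⟩) t0mem).2.1.continuousAt).continuousWithinAt
      have hderiv2 : ∀ s ∈ Ioo y0 (y0+h),
          HasDerivAt (fun s => u x0 s t0) (pdy u x0 s t0) s := by
        intro s hs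
        exact ((hsol.smooth hx0L (Set.mem_Icc.mpr ⟨le_trans hy0a hs.1.le, by
          linarith [hs.2.le]⟩) t0mem).2.1).hasDerivAt
      obtain ⟨ξ, hξ, hξeq⟩ := exists_hasDerivAt_eq_slope (fun s => u x0 s t0)
        (fun s => pdy u x0 s t0) (by linarith : y0 < y0 + h) hcont2 hderiv2
      have hgb : gradNorm u x0 ξ t0 ≤ M' := hseg ξ ⟨hξ.1.le, hξ.2.le⟩
      have hpdyξ : -M' ≤ pdy u x0 ξ t0 :=
        le_trans (neg_le_neg hgb) (neg_gradNorm_le_pdy u x0 ξ t0)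
      have hdiff : u x0 (y0+h) t0 - u x0 y0 t0 = pdy u x0 ξ t0 * h := by
        have hne : (y0 + h) - y0 ≠ 0 := by intro hc; apply absurd hc; simp; linarith
        field_simp at hξeq
        linarith [hξeq]
      show -(M'*h) + ε'*(T/2) ≤ u x0 (y0+h) t0 - u x0 y0 t0 + ε'*t0
      rw [hdiff]
      nlinarith [hpdyξ, hh.le]
    · -- interior: contradiction via the PDE
      exfalso
      push_neg at hbd
      obtain ⟨hxne, hyne, htne⟩ := hbd
      have hx0lt : |x0| < L/2 := lt_of_le_of_ne hx0 hxne
      have hy0pos : 0 < y0 := lt_of_le_of_ne hy0a (Ne.symm hy00)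
      have hy0lt : y0 < 3*L/4 := lt_of_le_of_ne hy0b hyne
      have ht0gt : T/2 < t0 := lt_of_le_of_ne ht0a (Ne.symm htne)
      have hx0L' : |x0| < L := lt_of_lt_of_le hx0lt (by linarith)
      have hyhL : y0 + h < L := by linarith
      have cA := hsol.smooth (le_of_lt hx0L')
        (Set.mem_Icc.mpr ⟨by linarith, le_of_lt hyhL⟩) t0mem
      have cB := hsol.smooth (le_of_lt hx0L')
        (Set.mem_Icc.mpr ⟨hy0a, by linarith⟩) t0mem
      -- x-direction
      have hδxpos : 0 < L/2 - |x0| := by linarith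
      have hxbound : ∀ x' ∈ Ioo (x0 - (L/2 - |x0|)) (x0 + (L/2 - |x0|)), |x'| ≤ L/2 := by
        intro x' hx'
        have h1 := neg_abs_le x0
        have h2 := le_abs_self x0
        exact abs_le.mpr ⟨by linarith [hx'.1], by linarith [hx'.2]⟩
      have hminx : ∀ x' ∈ Ioo (x0 - (L/2 - |x0|)) (x0 + (L/2 - |x0|)),
          (fun x' => u x' (y0+h) t0 - u x' y0 t0) x0 ≤
          (fun x' => u x' (y0+h) t0 - u x' y0 t0) x' := by
        intro x' hx'
        have hm := isMinOn_iff.mp hq0min (x', y0, t0) (by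
          simp only [hSdef, Set.mem_prod]
          exact ⟨Set.mem_Icc.mpr (abs_le.mp (hxbound x' hx')),
            Set.mem_Icc.mpr ⟨hy0a, hy0b⟩, Set.mem_Icc.mpr ⟨ht0a, ht0b⟩⟩)
        simp only [hZdef] at hm
        simp only []
        linarith [hm]
      have hψx : ∀ x' ∈ Ioo (x0 - (L/2 - |x0|)) (x0 + (L/2 - |x0|)),
          HasDerivAt (fun x' => u x' (y0+h) t0 - u x' y0 t0)
            ((fun x' => pdx u x' (y0+h) t0 - pdx u x' y0 t0) x') x' := by
        intro x' hx'
        have hxl : |x'| ≤ L := le_trans (hxbound x' hx') (by linarith)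
        have c1 := hsol.smooth hxl (Set.mem_Icc.mpr ⟨by linarith, le_of_lt hyhL⟩) t0mem
        have c2 := hsol.smooth hxl (Set.mem_Icc.mpr ⟨hy0a, by linarith⟩) t0mem
        exact (c1.1.hasDerivAt).sub (c2.1.hasDerivAt)
      have hcx : HasDerivAt (fun x' => pdx u x' (y0+h) t0 - pdx u x' y0 t0)
          (pdxx u x0 (y0+h) t0 - pdxx u x0 y0 t0) x0 :=
        (cA.2.2.2.1.hasDerivAt).sub (cB.2.2.2.1.hasDerivAt)
      obtain ⟨hpx0, hpxx⟩ := interior_min_facts hδxpos hminx hψx hcx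
      -- y-direction
      have hδypos : 0 < min y0 (3*L/4 - y0) := lt_min hy0pos (by linarith)
      have hybound : ∀ y' ∈ Ioo (y0 - min y0 (3*L/4 - y0)) (y0 + min y0 (3*L/4 - y0)),
          0 ≤ y' ∧ y' ≤ 3*L/4 := by
        intro y' hy'
        have h1 : min y0 (3*L/4 - y0) ≤ y0 := min_le_left _ _
        have h2 : min y0 (3*L/4 - y0) ≤ 3*L/4 - y0 := min_le_right _ _
        exact ⟨by linarith [hy'.1], by linarith [hy'.2]⟩
      have hminy : ∀ y' ∈ Ioo (y0 - min y0 (3*L/4 - y0)) (y0 + min y0 (3*L/4 - y0)),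
          (fun y' => u x0 (y'+h) t0 - u x0 y' t0) y0 ≤
          (fun y' => u x0 (y'+h) t0 - u x0 y' t0) y' := by
        intro y' hy'
        obtain ⟨hb1, hb2⟩ := hybound y' hy'
        have hm := isMinOn_iff.mp hq0min (x0, y', t0) (by
          simp only [hSdef, Set.mem_prod]
          exact ⟨Set.mem_Icc.mpr (abs_le.mp hx0),
            Set.mem_Icc.mpr ⟨hb1, hb2⟩, Set.mem_Icc.mpr ⟨ht0a, ht0b⟩⟩)
        simp only [hZdef] at hm
        simp only []
        linarith [hm]
      have hψy : ∀ y' ∈ Ioo (y0 - min y0 (3*L/4 - y0)) (y0 + min y0 (3*L/4 - y0)),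
          HasDerivAt (fun y' => u x0 (y'+h) t0 - u x0 y' t0)
            ((fun y' => pdy u x0 (y'+h) t0 - pdy u x0 y' t0) y') y' := by
        intro y' hy'
        obtain ⟨hb1, hb2⟩ := hybound y' hy'
        have c1 := hsol.smooth (le_of_lt hx0L')
          (Set.mem_Icc.mpr ⟨by linarith, by linarith⟩ : y' + h ∈ Icc (0:ℝ) L) t0mem
        have c2 := hsol.smooth (le_of_lt hx0L')
          (Set.mem_Icc.mpr ⟨hb1, by linarith⟩ : y' ∈ Icc (0:ℝ) L) t0mem
        have d1 : HasDerivAt (fun s => u x0 s t0) (pdy u x0 (y'+h) t0) (y'+h) :=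
          c1.2.1.hasDerivAt
        have d1' : HasDerivAt (fun s => u x0 (s+h) t0) (pdy u x0 (y'+h) t0) y' := by
          simpa [Function.comp_def] using d1.comp y' ((hasDerivAt_id y').add_const h)
        exact d1'.sub c2.2.1.hasDerivAt
      have hcy : HasDerivAt (fun y' => pdy u x0 (y'+h) t0 - pdy u x0 y' t0)
          (pdyy u x0 (y0+h) t0 - pdyy u x0 y0 t0) y0 := by
        have e1 : HasDerivAt (fun s => pdy u x0 s t0) (pdyy u x0 (y0+h) t0) (y0+h) :=
          cA.2.2.2.2.1.hasDerivAt
        have e1' : HasDerivAt (fun s => pdy u x0 (s+h) t0) (pdyy u x0 (y0+h) t0) y0 := by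
          simpa [Function.comp_def] using e1.comp y0 ((hasDerivAt_id y0).add_const h)
        exact e1'.sub cB.2.2.2.2.1.hasDerivAt
      obtain ⟨hpy0, hpyy⟩ := interior_min_facts hδypos hminy hψy hcy
      -- t-direction
      have hming : ∀ t' ∈ Icc (T/2) t0,
          (fun t' => u x0 (y0+h) t' - u x0 y0 t' + ε'*t') t0 ≤
          (fun t' => u x0 (y0+h) t' - u x0 y0 t' + ε'*t') t' := by
        intro t' ht'
        have hm := isMinOn_iff.mp hq0min (x0, y0, t') (by
          simp only [hSdef, Set.mem_prod]
          exact ⟨Set.mem_Icc.mpr (abs_le.mp hx0),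
            Set.mem_Icc.mpr ⟨hy0a, hy0b⟩, Set.mem_Icc.mpr ⟨ht'.1, le_trans ht'.2 ht0b⟩⟩)
        simp only [hZdef] at hm
        simp only []
        linarith [hm]
      have hg : HasDerivAt (fun t' => u x0 (y0+h) t' - u x0 y0 t' + ε'*t')
          (pdt u x0 (y0+h) t0 - pdt u x0 y0 t0 + ε') t0 := by
        have e3 : HasDerivAt (fun t' : ℝ => ε'*t') ε' t0 := by
          simpa using (hasDerivAt_id t0).const_mul ε'
        exact ((cA.2.2.1.hasDerivAt).sub (cB.2.2.1.hasDerivAt)).add e3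
      have hpt : pdt u x0 (y0+h) t0 - pdt u x0 y0 t0 + ε' ≤ 0 :=
        deriv_nonpos_of_left_min ht0gt hming hg
      -- PDE at both points
      have pA := hsol.pde hx0L' (Set.mem_Ioo.mpr ⟨by linarith, hyhL⟩) t0mem
      have pB := hsol.pde hx0L' (Set.mem_Ioo.mpr ⟨hy0pos, by linarith⟩) t0mem
      have hpxeq : pdx u x0 (y0+h) t0 = pdx u x0 y0 t0 := sub_eq_zero.mp hpx0
      have hpyeq : pdy u x0 (y0+h) t0 = pdy u x0 y0 t0 := sub_eq_zero.mp hpy0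
      have hgeq : gradNorm u x0 (y0+h) t0 = gradNorm u x0 y0 t0 := by
        rw [gradNorm, gradNorm, hpxeq, hpyeq]
      rw [hgeq] at pA
      linarith [pA, pB, hpxx, hpyy, hpt, hε']
  -- finite-difference lower bound up to time T
  have keyB : ∀ x y t : ℝ, |x| ≤ L/2 → 0 ≤ y → y ≤ L/2 → T/2 ≤ t → t < T →
      ∀ h : ℝ, 0 < h → h < L/4 → -(M'*h) ≤ u x (y+h) t - u x y t := by
    intro x y t hx hy1 hy2 ht1 ht2 h hh hh4
    refine le_of_forall_pos_le_add ?_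
    intro ε hε
    have hε' : 0 < ε / T := div_pos hε hT
    have hm := minp (ε/T) hε' h hh hh4 ((t+T)/2) (by linarith) (by linarith) x y t
      (Set.mem_Icc.mpr (abs_le.mp hx)) (Set.mem_Icc.mpr ⟨hy1, by linarith⟩)
      (Set.mem_Icc.mpr ⟨ht1, by linarith⟩)
    have h1 : (ε/T)*t ≤ ε := by
      have := mul_le_mul_of_nonneg_left (le_of_lt ht2) (le_of_lt hε')
      rwa [div_mul_cancel₀ ε (ne_of_gt hT)] at this
    have h2 : 0 ≤ (ε/T)*(T/2) := by positivity
    linarith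
  -- derivative lower bound for t < T
  have keyC : ∀ x y t : ℝ, |x| ≤ L/2 → y ∈ Icc (0:ℝ) (L/2) → T/2 ≤ t → t < T →
      -M' ≤ pdy u x y t := by
    intro x y t hx hy ht1 ht2
    have hd : HasDerivAt (fun s => u x s t) (pdy u x y t) y :=
      (hsol.smooth (le_trans hx (by linarith))
        (Set.mem_Icc.mpr ⟨hy.1, le_trans hy.2 (by linarith)⟩)
        ⟨by linarith, ht2⟩).2.1.hasDerivAt
    refine le_deriv_of_forward (by linarith : (0:ℝ) < L/4) hd ?_
    intro h hh hh4
    have hk := keyB x y t hx hy.1 hy.2 ht1 ht2 h hh hh4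
    rw [le_div_iff₀ hh]
    linarith
  refine ⟨M' + 1, by linarith, ?_⟩
  intro x y t hx hy ht hne
  rcases lt_or_eq_of_le ht.2 with hlt | heq
  · have := keyC x y t hx hy ht.1 hlt
    linarith
  · subst heq
    have hc := hext hx hy (Set.mem_Icc.mpr ⟨by linarith, le_refl t⟩) hne
    have h9 := hc.2.2.2.2.2.2.2.2.1
    have hinner : Tendsto (fun s : ℝ => ((x, y, s) : ℝ×ℝ×ℝ)) (𝓝[<] t) (𝓝 (x, y, t)) :=
      ((continuous_const.prodMk (continuous_const.prodMk continuous_id)).tendsto t).mono_left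
        nhdsWithin_le_nhds
    have htd : Tendsto (fun s => pdy u x y s) (𝓝[<] t) (𝓝 (pdy u x y t)) :=
      h9.tendsto.comp hinner
    refine ge_of_tendsto htd ?_
    filter_upwards [Ioo_mem_nhdsLT_of_mem (⟨by linarith, le_refl t⟩ : t ∈ Ioc (t/2) t)]
      with s hs
    have := keyC x y s hx hy (le_of_lt hs.1) hs.2
    linarith
end
end

section
/- Let p>2, let u be a nonnegative classical solution of u_t−Δu=|∇u|^p in Q_T with u=0 on Γ_T, having an isolated gradient blowup point at (0,0,T). Then there exists a constant C>0 (possibly depending on u) such that u_xx ≥ −C on Q̃:=(ω̄'×[T/2,T])∖{(0,0,T)}. -/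
open Real Set Filter MeasureTheory

noncomputable section

open Topology

section AuxLemmas

/-- Cauchy-Schwarz in ℝ². -/
private lemma two_inner_le (a₁ a₂ b₁ b₂ : ℝ) :
    a₁*b₁ + a₂*b₂ ≤ Real.sqrt (a₁^2+a₂^2) * Real.sqrt (b₁^2+b₂^2) := by
  have h1 : a₁*b₁ + a₂*b₂ ≤ Real.sqrt ((a₁*b₁+a₂*b₂)^2) := by
    rw [Real.sqrt_sq_eq_abs]; exact le_abs_self _
  have h2 : ((a₁*b₁+a₂*b₂)^2) ≤ (a₁^2+a₂^2) * (b₁^2+b₂^2) := by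
    nlinarith [sq_nonneg (a₁*b₂ - a₂*b₁)]
  calc a₁*b₁ + a₂*b₂ ≤ Real.sqrt ((a₁*b₁+a₂*b₂)^2) := h1
    _ ≤ Real.sqrt ((a₁^2+a₂^2) * (b₁^2+b₂^2)) := Real.sqrt_le_sqrt h2
    _ = Real.sqrt (a₁^2+a₂^2) * Real.sqrt (b₁^2+b₂^2) := Real.sqrt_mul (by positivity) _

/-- Minkowski inequality in ℝ². -/
private lemma minkowski2 (a₁ a₂ b₁ b₂ : ℝ) :
    Real.sqrt ((a₁+b₁)^2+(a₂+b₂)^2) ≤ Real.sqrt (a₁^2+a₂^2) + Real.sqrt (b₁^2+b₂^2) := by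
  have hna : Real.sqrt (a₁^2+a₂^2) ^ 2 = a₁^2+a₂^2 := Real.sq_sqrt (by positivity)
  have hnb : Real.sqrt (b₁^2+b₂^2) ^ 2 = b₁^2+b₂^2 := Real.sq_sqrt (by positivity)
  have h := two_inner_le a₁ a₂ b₁ b₂
  have h2 : (a₁+b₁)^2+(a₂+b₂)^2 ≤ (Real.sqrt (a₁^2+a₂^2) + Real.sqrt (b₁^2+b₂^2))^2 := by
    nlinarith
  calc Real.sqrt ((a₁+b₁)^2+(a₂+b₂)^2)
      ≤ Real.sqrt ((Real.sqrt (a₁^2+a₂^2) + Real.sqrt (b₁^2+b₂^2))^2) := Real.sqrt_le_sqrt h2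
    _ = Real.sqrt (a₁^2+a₂^2) + Real.sqrt (b₁^2+b₂^2) := by
        rw [Real.sqrt_sq (by positivity)]

/-- Midpoint convexity of `t ^ p` on nonnegative reals. -/
private lemma midpoint_rpow {p : ℝ} (hp : 1 ≤ p) {s t : ℝ} (hs : 0 ≤ s) (ht : 0 ≤ t) :
    ((s+t)/2) ^ p ≤ (s ^ p + t ^ p)/2 := by
  have h := (convexOn_rpow hp).2 (mem_Ici.2 hs) (mem_Ici.2 ht)
      (by norm_num : (0:ℝ) ≤ 1/2) (by norm_num : (0:ℝ) ≤ 1/2) (by norm_num)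
  simp only [smul_eq_mul] at h
  calc ((s+t)/2) ^ p = (1/2*s + 1/2*t) ^ p := by ring_nf
    _ ≤ 1/2 * s^p + 1/2 * t^p := h
    _ = (s ^ p + t ^ p)/2 := by ring

/-- Convexity consequence: midpoint condition for gradients. -/
private lemma grad_mid {p : ℝ} (hp : 1 ≤ p) {a₁ a₂ b₁ b₂ c₁ c₂ : ℝ}
    (h1 : a₁ + b₁ = 2*c₁) (h2 : a₂ + b₂ = 2*c₂) :
    2 * Real.sqrt (c₁^2+c₂^2) ^ p ≤ Real.sqrt (a₁^2+a₂^2) ^ p + Real.sqrt (b₁^2+b₂^2) ^ p := by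
  have key : Real.sqrt (c₁^2+c₂^2) ≤ (Real.sqrt (a₁^2+a₂^2) + Real.sqrt (b₁^2+b₂^2))/2 := by
    have hm := minkowski2 a₁ a₂ b₁ b₂
    have h4 : Real.sqrt ((a₁+b₁)^2+(a₂+b₂)^2) = 2 * Real.sqrt (c₁^2+c₂^2) := by
      rw [h1, h2]
      rw [show (2*c₁)^2 + (2*c₂)^2 = 2^2*(c₁^2+c₂^2) by ring]
      rw [Real.sqrt_mul (by positivity), Real.sqrt_sq (by norm_num)]
    linarith [h4 ▸ hm]
  have h5 : Real.sqrt (c₁^2+c₂^2) ^ p ≤ ((Real.sqrt (a₁^2+a₂^2) + Real.sqrt (b₁^2+b₂^2))/2) ^ p :=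
    Real.rpow_le_rpow (Real.sqrt_nonneg _) key (by linarith)
  have h6 := midpoint_rpow hp (Real.sqrt_nonneg (a₁^2+a₂^2)) (Real.sqrt_nonneg (b₁^2+b₂^2))
  linarith

/-- If a function is ≥ its value at the right endpoint on an interval to the left,
its derivative there is nonpositive. -/
private lemma deriv_left_nonpos {φ : ℝ → ℝ} {t₁ t₀ : ℝ} (hlt : t₁ < t₀)
    (hd : DifferentiableAt ℝ φ t₀) (hmin : ∀ t ∈ Icc t₁ t₀, φ t₀ ≤ φ t) :
    deriv φ t₀ ≤ 0 := by
  have hsl : Tendsto (slope φ t₀) (𝓝[≠] t₀) (𝓝 (deriv φ t₀)) :=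
    hasDerivAt_iff_tendsto_slope.mp hd.hasDerivAt
  have h2 : Tendsto (slope φ t₀) (𝓝[<] t₀) (𝓝 (deriv φ t₀)) := by
    apply hsl.mono_left (nhdsWithin_mono _ _)
    intro x hx
    simp only [mem_Iio] at hx
    simp only [mem_compl_iff, mem_singleton_iff]
    exact ne_of_lt hx
  have hIoo : Ioo t₁ t₀ ∈ 𝓝[<] t₀ := by
    have h3 : Ioi t₁ ∈ 𝓝 t₀ := Ioi_mem_nhds hlt
    have := inter_mem (mem_nhdsWithin_of_mem_nhds h3) (self_mem_nhdsWithin (s := Iio t₀) (a := t₀))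
    simpa [Ioi_inter_Iio] using this
  have hev : ∀ᶠ t in 𝓝[<] t₀, slope φ t₀ t ≤ 0 := by
    filter_upwards [hIoo] with t ht
    rw [slope_def_field]
    apply div_nonpos_of_nonneg_of_nonpos
    · have := hmin t ⟨le_of_lt ht.1, le_of_lt ht.2⟩; linarith
    · linarith [ht.2]
  exact le_of_tendsto h2 hev

/-- Second derivative test at an interior local minimum. -/
private lemma isLocalMin_deriv2 {g : ℝ → ℝ} {x₀ pp qq : ℝ} (hx : x₀ ∈ Ioo pp qq)
    (hg : ∀ s ∈ Ioo pp qq, DifferentiableAt ℝ g s)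
    (hg2 : DifferentiableAt ℝ (deriv g) x₀)
    (hmin : ∀ s ∈ Ioo pp qq, g x₀ ≤ g s) :
    deriv g x₀ = 0 ∧ 0 ≤ deriv (deriv g) x₀ := by
  have hIoo : Ioo pp qq ∈ 𝓝 x₀ := Ioo_mem_nhds hx.1 hx.2
  have hloc : IsLocalMin g x₀ := eventually_of_mem hIoo hmin
  have h1 : deriv g x₀ = 0 := hloc.deriv_eq_zero
  refine ⟨h1, ?_⟩
  by_contra hneg
  push_neg at hneg
  set c := deriv (deriv g) x₀ with hc
  have hsl : Tendsto (slope (deriv g) x₀) (𝓝[≠] x₀) (𝓝 c) :=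
    hasDerivAt_iff_tendsto_slope.mp hg2.hasDerivAt
  have hev : ∀ᶠ s in 𝓝[≠] x₀, slope (deriv g) x₀ s < c/2 :=
    hsl.eventually_lt_const (by linarith)
  rw [eventually_nhdsWithin_iff] at hev
  have hev2 : ∀ᶠ s in 𝓝 x₀, (s ∈ ({x₀}ᶜ : Set ℝ) → slope (deriv g) x₀ s < c/2) ∧ s ∈ Ioo pp qq :=
    hev.and (eventually_of_mem hIoo (fun s hs => hs))
  obtain ⟨l, r, hxlr, hsub⟩ := mem_nhds_iff_exists_Ioo_subset.mp hev2
  set s₁ := (x₀ + r)/2 with hs₁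
  have hxs₁ : x₀ < s₁ := by simp only [hs₁]; linarith [hxlr.2]
  have hs₁r : s₁ < r := by simp only [hs₁]; linarith [hxlr.2]
  have hIccsub : Icc x₀ s₁ ⊆ Ioo l r := fun z hz =>
    ⟨lt_of_lt_of_le hxlr.1 hz.1, lt_of_le_of_lt hz.2 hs₁r⟩
  have hIccIoo : Icc x₀ s₁ ⊆ Ioo pp qq := fun z hz => (hsub (hIccsub hz)).2
  have hcont : ContinuousOn g (Icc x₀ s₁) := fun z hz =>
    ((hg z (hIccIoo hz)).continuousAt).continuousWithinAt
  have hder : ∀ z ∈ Ioo x₀ s₁, HasDerivAt g (deriv g z) z := fun z hz =>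
    (hg z (hIccIoo ⟨le_of_lt hz.1, le_of_lt hz.2⟩)).hasDerivAt
  obtain ⟨ξ, hξ, hξeq⟩ := exists_hasDerivAt_eq_slope g (deriv g) hxs₁ hcont hder
  have hξ1 : deriv g ξ ≥ 0 := by
    rw [hξeq]
    apply div_nonneg
    · have := hmin s₁ (hIccIoo ⟨le_of_lt hxs₁, le_refl _⟩); linarith
    · linarith [hξ.1, hξ.2]
  have hξ2 : deriv g ξ < 0 := by
    have hmem : ξ ∈ Ioo l r := hIccsub ⟨le_of_lt hξ.1, le_of_lt hξ.2⟩
    have hne : ξ ∈ ({x₀}ᶜ : Set ℝ) := by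
      simp only [mem_compl_iff, mem_singleton_iff]
      exact ne_of_gt hξ.1
    have hslope := (hsub hmem).1 hne
    rw [slope_def_field, h1, sub_zero] at hslope
    have hpos : 0 < ξ - x₀ := by linarith [hξ.1]
    have := (div_lt_iff₀ hpos).mp hslope
    nlinarith
  linarith

/-- Chord lower bound from a lower bound on the second derivative. -/
private lemma chord_lower {g : ℝ → ℝ} {h δ A : ℝ} (hh : 0 < h) (hδ : 0 < δ)
    (hg : ∀ s ∈ Ioo (-δ) (h+δ), DifferentiableAt ℝ g s)
    (hg2 : ∀ s ∈ Ioo (-δ) (h+δ), DifferentiableAt ℝ (deriv g) s)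
    (h0 : deriv g 0 = 0)
    (hA : ∀ s ∈ Icc 0 h, A ≤ deriv (deriv g) s) :
    g 0 + A/2*h^2 ≤ g h := by
  have hsubset : Icc (0:ℝ) h ⊆ Ioo (-δ) (h+δ) := fun z hz =>
    ⟨by linarith [hz.1], by linarith [hz.2]⟩
  have hmono1 : MonotoneOn (fun s => deriv g s - A*s) (Icc 0 h) := by
    apply monotoneOn_of_deriv_nonneg (convex_Icc 0 h)
    · intro z hz
      exact (((hg2 z (hsubset hz)).sub
        ((differentiableAt_fun_id).const_mul A)).continuousAt).continuousWithinAt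
    · rw [interior_Icc]
      intro z hz
      exact (((hg2 z (hsubset ⟨le_of_lt hz.1, le_of_lt hz.2⟩)).sub
        ((differentiableAt_fun_id).const_mul A))).differentiableWithinAt
    · rw [interior_Icc]
      intro z hz
      have hd : HasDerivAt (fun s => deriv g s - A*s) (deriv (deriv g) z - A) z := by
        have h1 := (hg2 z (hsubset ⟨le_of_lt hz.1, le_of_lt hz.2⟩)).hasDerivAt
        have h2 : HasDerivAt (fun s : ℝ => A*s) A z := by
          simpa using (hasDerivAt_id z).const_mul A
        exact h1.sub h2
      rw [hd.deriv]
      have := hA z ⟨le_of_lt hz.1, le_of_lt hz.2⟩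
      linarith
  have hstep1 : ∀ s ∈ Icc (0:ℝ) h, A*s ≤ deriv g s := by
    intro s hs
    have := hmono1 (left_mem_Icc.2 (le_of_lt hh)) hs hs.1
    simp only at this
    rw [h0] at this
    linarith
  have hmono2 : MonotoneOn (fun s => g s - A/2*s^2) (Icc 0 h) := by
    apply monotoneOn_of_deriv_nonneg (convex_Icc 0 h)
    · intro z hz
      exact (((hg z (hsubset hz)).sub
        (((differentiableAt_fun_id).pow 2).const_mul (A/2))).continuousAt).continuousWithinAt
    · rw [interior_Icc]
      intro z hz
      exact ((hg z (hsubset ⟨le_of_lt hz.1, le_of_lt hz.2⟩)).sub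
        (((differentiableAt_fun_id).pow 2).const_mul (A/2))).differentiableWithinAt
    · rw [interior_Icc]
      intro z hz
      have hd : HasDerivAt (fun s => g s - A/2*s^2) (deriv g z - A*z) z := by
        have h1 := (hg z (hsubset ⟨le_of_lt hz.1, le_of_lt hz.2⟩)).hasDerivAt
        have h2 : HasDerivAt (fun s : ℝ => A/2*s^2) (A*z) z := by
          have := ((hasDerivAt_pow 2 z).const_mul (A/2))
          exact this.congr_deriv (by push_cast; ring)
        exact h1.sub h2
      rw [hd.deriv]
      have := hstep1 z ⟨le_of_lt hz.1, le_of_lt hz.2⟩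
      linarith
  have := hmono2 (left_mem_Icc.2 (le_of_lt hh)) (right_mem_Icc.2 (le_of_lt hh)) (le_of_lt hh)
  simp only at this
  nlinarith [this]

/-- Chord upper bound from an upper bound on the second derivative. -/
private lemma chord_upper {g : ℝ → ℝ} {h δ A : ℝ} (hh : 0 < h) (hδ : 0 < δ)
    (hg : ∀ s ∈ Ioo (-δ) (h+δ), DifferentiableAt ℝ g s)
    (hg2 : ∀ s ∈ Ioo (-δ) (h+δ), DifferentiableAt ℝ (deriv g) s)
    (h0 : deriv g 0 = 0)
    (hA : ∀ s ∈ Icc 0 h, deriv (deriv g) s ≤ A) :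
    g h ≤ g 0 + A/2*h^2 := by
  have hsubset : Icc (0:ℝ) h ⊆ Ioo (-δ) (h+δ) := fun z hz =>
    ⟨by linarith [hz.1], by linarith [hz.2]⟩
  have hmono1 : MonotoneOn (fun s => A*s - deriv g s) (Icc 0 h) := by
    apply monotoneOn_of_deriv_nonneg (convex_Icc 0 h)
    · intro z hz
      exact ((((differentiableAt_fun_id).const_mul A).sub
        (hg2 z (hsubset hz))).continuousAt).continuousWithinAt
    · rw [interior_Icc]
      intro z hz
      exact (((differentiableAt_fun_id).const_mul A).sub
        (hg2 z (hsubset ⟨le_of_lt hz.1, le_of_lt hz.2⟩))).differentiableWithinAt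
    · rw [interior_Icc]
      intro z hz
      have hd : HasDerivAt (fun s => A*s - deriv g s) (A - deriv (deriv g) z) z := by
        have h1 := (hg2 z (hsubset ⟨le_of_lt hz.1, le_of_lt hz.2⟩)).hasDerivAt
        have h2 : HasDerivAt (fun s : ℝ => A*s) A z := by
          simpa using (hasDerivAt_id z).const_mul A
        exact h2.sub h1
      rw [hd.deriv]
      have := hA z ⟨le_of_lt hz.1, le_of_lt hz.2⟩
      linarith
  have hstep1 : ∀ s ∈ Icc (0:ℝ) h, deriv g s ≤ A*s := by
    intro s hs
    have := hmono1 (left_mem_Icc.2 (le_of_lt hh)) hs hs.1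
    simp only at this
    rw [h0] at this
    linarith
  have hmono2 : MonotoneOn (fun s => A/2*s^2 - g s) (Icc 0 h) := by
    apply monotoneOn_of_deriv_nonneg (convex_Icc 0 h)
    · intro z hz
      exact ((((((differentiableAt_fun_id).pow 2).const_mul (A/2))).sub
        (hg z (hsubset hz))).continuousAt).continuousWithinAt
    · rw [interior_Icc]
      intro z hz
      exact (((((differentiableAt_fun_id).pow 2).const_mul (A/2))).sub
        (hg z (hsubset ⟨le_of_lt hz.1, le_of_lt hz.2⟩))).differentiableWithinAt
    · rw [interior_Icc]
      intro z hz
      have hd : HasDerivAt (fun s => A/2*s^2 - g s) (A*z - deriv g z) z := by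
        have h1 := (hg z (hsubset ⟨le_of_lt hz.1, le_of_lt hz.2⟩)).hasDerivAt
        have h2 : HasDerivAt (fun s : ℝ => A/2*s^2) (A*z) z := by
          have := ((hasDerivAt_pow 2 z).const_mul (A/2))
          exact this.congr_deriv (by push_cast; ring)
        exact h2.sub h1
      rw [hd.deriv]
      have := hstep1 z ⟨le_of_lt hz.1, le_of_lt hz.2⟩
      linarith
  have := hmono2 (left_mem_Icc.2 (le_of_lt hh)) (right_mem_Icc.2 (le_of_lt hh)) (le_of_lt hh)
  simp only at this
  nlinarith [this]

private lemma hasDerivAt_comp_add_const (f : ℝ → ℝ) (c x : ℝ) (hf : DifferentiableAt ℝ f (x+c)) :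
    HasDerivAt (fun s => f (s+c)) (deriv f (x+c)) x := by
  have h := hf.hasDerivAt.comp x ((hasDerivAt_id x).add_const c)
  simpa [Function.comp_def] using h

private lemma hasDerivAt_comp_sub_const (f : ℝ → ℝ) (c x : ℝ) (hf : DifferentiableAt ℝ f (x-c)) :
    HasDerivAt (fun s => f (s-c)) (deriv f (x-c)) x := by
  have h := hf.hasDerivAt.comp x ((hasDerivAt_id x).sub_const c)
  simpa [Function.comp_def] using h

private lemma hasDerivAt_comp_const_add (f : ℝ → ℝ) (c x : ℝ) (hf : DifferentiableAt ℝ f (c+x)) :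
    HasDerivAt (fun s => f (c+s)) (deriv f (c+x)) x := by
  have h := hf.hasDerivAt.comp x ((hasDerivAt_id x).const_add c)
  simpa [Function.comp_def] using h

private lemma hasDerivAt_comp_const_sub (f : ℝ → ℝ) (c x : ℝ) (hf : DifferentiableAt ℝ f (c-x)) :
    HasDerivAt (fun s => f (c-s)) (-deriv f (c-x)) x := by
  have h := hf.hasDerivAt.comp x ((hasDerivAt_id x).const_sub c)
  simpa [Function.comp_def, mul_comm] using h

/-- Derivative of the centered second difference (variable center). -/
private lemma hasDerivAt_center (f : ℝ → ℝ) (h x : ℝ)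
    (h1 : DifferentiableAt ℝ f (x+h)) (h2 : DifferentiableAt ℝ f (x-h))
    (h3 : DifferentiableAt ℝ f x) :
    HasDerivAt (fun s => f (s+h) + f (s-h) - 2*f s)
      (deriv f (x+h) + deriv f (x-h) - 2*deriv f x) x :=
  ((hasDerivAt_comp_add_const f h x h1).add (hasDerivAt_comp_sub_const f h x h2)).sub
    (h3.hasDerivAt.const_mul 2)

/-- Derivative of the second difference as a function of the offset. -/
private lemma hasDerivAt_offset (f : ℝ → ℝ) (c s : ℝ)
    (h1 : DifferentiableAt ℝ f (c+s)) (h2 : DifferentiableAt ℝ f (c-s)) :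
    HasDerivAt (fun r => f (c+r) + f (c-r) - 2*f c)
      (deriv f (c+s) - deriv f (c-s)) s := by
  have h := ((hasDerivAt_comp_const_add f c s h1).add
    (hasDerivAt_comp_const_sub f c s h2)).sub_const (2*f c)
  simpa [sub_eq_add_neg] using h

/-- Derivative of the offset-form first derivative. -/
private lemma hasDerivAt_offsetD (F : ℝ → ℝ) (c s : ℝ)
    (h1 : DifferentiableAt ℝ F (c+s)) (h2 : DifferentiableAt ℝ F (c-s)) :
    HasDerivAt (fun r => F (c+r) - F (c-r))
      (deriv F (c+s) + deriv F (c-s)) s := by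
  have h := (hasDerivAt_comp_const_add F c s h1).sub (hasDerivAt_comp_const_sub F c s h2)
  exact h.congr_deriv (by ring)

/-- Derivative of a combination of three functions. -/
private lemma hasDerivAt_comb3 (f1 f2 f3 : ℝ → ℝ) (r : ℝ)
    (h1 : DifferentiableAt ℝ f1 r) (h2 : DifferentiableAt ℝ f2 r)
    (h3 : DifferentiableAt ℝ f3 r) :
    HasDerivAt (fun r => f1 r + f2 r - 2*f3 r)
      (deriv f1 r + deriv f2 r - 2*deriv f3 r) r :=
  (h1.hasDerivAt.add h2.hasDerivAt).sub (h3.hasDerivAt.const_mul 2)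

private lemma C21At.diffX {u : ℝ → ℝ → ℝ → ℝ} {x y t : ℝ} (h : C21At u x y t) :
    DifferentiableAt ℝ (fun s => u s y t) x := h.1

private lemma C21At.diffY {u : ℝ → ℝ → ℝ → ℝ} {x y t : ℝ} (h : C21At u x y t) :
    DifferentiableAt ℝ (fun s => u x s t) y := h.2.1

private lemma C21At.diffT {u : ℝ → ℝ → ℝ → ℝ} {x y t : ℝ} (h : C21At u x y t) :
    DifferentiableAt ℝ (fun s => u x y s) t := h.2.2.1

private lemma C21At.diffXX {u : ℝ → ℝ → ℝ → ℝ} {x y t : ℝ} (h : C21At u x y t) :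
    DifferentiableAt ℝ (fun s => pdx u s y t) x := h.2.2.2.1

private lemma C21At.diffYY {u : ℝ → ℝ → ℝ → ℝ} {x y t : ℝ} (h : C21At u x y t) :
    DifferentiableAt ℝ (fun s => pdy u x s t) y := h.2.2.2.2.1

private lemma C21At.contU {u : ℝ → ℝ → ℝ → ℝ} {x y t : ℝ} (h : C21At u x y t) :
    ContinuousAt (fun q : ℝ × ℝ × ℝ => u q.1 q.2.1 q.2.2) (x, y, t) := h.2.2.2.2.2.2.1

private lemma C21At.contPdxx {u : ℝ → ℝ → ℝ → ℝ} {x y t : ℝ} (h : C21At u x y t) :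
    ContinuousAt (fun q : ℝ × ℝ × ℝ => pdxx u q.1 q.2.1 q.2.2) (x, y, t) :=
  h.2.2.2.2.2.2.2.2.2.2.1

end AuxLemmas

set_option maxHeartbeats 2000000 in
/-- Proposition 2.2 (iii): `u_xx ≥ -C` on `Q̃ = (ω̄' × [T/2,T]) \ {(0,0,T)}`. -/
theorem uxx_lower_bound (p L T : ℝ) (hp : 2 < p) (hL : 0 < L) (hT : 0 < T)
    (u : ℝ → ℝ → ℝ → ℝ)
    (hsol : ClassicalSolution p L T u) (hgbu : IsolatedGBU L T u)
    (hext : ExtC21 L T u) :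
    ∃ C : ℝ, 0 < C ∧ ∀ x y t : ℝ, |x| ≤ L/2 → y ∈ Icc (0:ℝ) (L/2) →
      t ∈ Icc (T/2) T → ¬(x = 0 ∧ y = 0 ∧ t = T) → -C ≤ pdxx u x y t := by
  have hp1 : (1:ℝ) ≤ p := by linarith
  -- a convenient access to smoothness in the open-time region
  have hsm : ∀ x' y' t' : ℝ, |x'| ≤ L → 0 ≤ y' → y' ≤ L → 0 < t' → t' < T →
      C21At u x' y' t' := fun x' y' t' hx hy0 hyL ht0 htT =>
    hsol.smooth hx ⟨hy0, hyL⟩ ⟨ht0, htT⟩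
  -- the compact set S capturing the parabolic boundary region of the inner cylinder
  set S : Set (ℝ × ℝ × ℝ) :=
    (Icc (-(3*L/8)) (3*L/8) ×ˢ Icc (0:ℝ) (L/4) ×ˢ Icc (T/2) T) ∩
      ({q : ℝ × ℝ × ℝ | L/8 ≤ |q.1|} ∪ {q : ℝ × ℝ × ℝ | q.2.1 = L/4} ∪
        {q : ℝ × ℝ × ℝ | q.2.2 = T/2}) with hSdef
  have hScomp : IsCompact S := by
    apply IsCompact.inter_right
    · exact (isCompact_Icc).prod ((isCompact_Icc).prod isCompact_Icc)
    · apply IsClosed.union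
      apply IsClosed.union
      · exact isClosed_le continuous_const (continuous_fst.abs)
      · exact isClosed_eq (continuous_fst.comp continuous_snd) continuous_const
      · exact isClosed_eq (continuous_snd.comp continuous_snd) continuous_const
  have hSreg : ∀ q ∈ S, C21At u q.1 q.2.1 q.2.2 := by
    intro q hq
    obtain ⟨⟨hq1, hq2, hq3⟩, hq4⟩ := hq
    apply hext
    · obtain ⟨ha, hb⟩ := hq1
      rw [abs_le]
      constructor <;> linarith
    · exact ⟨hq2.1, by linarith [hq2.2]⟩
    · exact hq3
    · rintro ⟨h1, h2, h3⟩
      rcases hq4 with (h4 | h4) | h4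
      · simp only [mem_setOf_eq, h1] at h4; simp at h4; linarith
      · simp only [mem_setOf_eq, h2] at h4; linarith
      · simp only [mem_setOf_eq, h3] at h4; linarith
  have hScont : ContinuousOn (fun q : ℝ × ℝ × ℝ => pdxx u q.1 q.2.1 q.2.2) S := by
    intro q hq
    have hC := hSreg q hq
    exact (hC.contPdxx).continuousWithinAt
  obtain ⟨K₀, hK₀⟩ := hScomp.exists_bound_of_continuousOn hScont
  set KS := max K₀ 0 with hKSdef
  have hKS0 : 0 ≤ KS := le_max_right _ _
  have hKSb : ∀ q ∈ S, |pdxx u q.1 q.2.1 q.2.2| ≤ KS := by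
    intro q hq
    calc |pdxx u q.1 q.2.1 q.2.2| = ‖pdxx u q.1 q.2.1 q.2.2‖ := (Real.norm_eq_abs _).symm
      _ ≤ K₀ := hK₀ q hq
      _ ≤ KS := le_max_left _ _
  -- the outer compact region
  set O : Set (ℝ × ℝ × ℝ) :=
    (Icc (-(L/2)) (L/2) ×ˢ Icc (0:ℝ) (L/2) ×ˢ Icc (T/2) T) ∩
      ({q : ℝ × ℝ × ℝ | L/8 ≤ |q.1|} ∪ {q : ℝ × ℝ × ℝ | L/4 ≤ q.2.1}) with hOdef
  have hOcomp : IsCompact O := by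
    apply IsCompact.inter_right
    · exact (isCompact_Icc).prod ((isCompact_Icc).prod isCompact_Icc)
    · apply IsClosed.union
      · exact isClosed_le continuous_const (continuous_fst.abs)
      · exact isClosed_le continuous_const (continuous_fst.comp continuous_snd)
  have hOreg : ∀ q ∈ O, C21At u q.1 q.2.1 q.2.2 := by
    intro q hq
    obtain ⟨⟨hq1, hq2, hq3⟩, hq4⟩ := hq
    apply hext
    · obtain ⟨ha, hb⟩ := hq1
      rw [abs_le]
      constructor <;> linarith
    · exact hq2
    · exact hq3
    · rintro ⟨h1, h2, _⟩
      rcases hq4 with h4 | h4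
      · simp only [mem_setOf_eq, h1] at h4; simp at h4; linarith
      · simp only [mem_setOf_eq, h2] at h4; linarith
  have hOcont : ContinuousOn (fun q : ℝ × ℝ × ℝ => pdxx u q.1 q.2.1 q.2.2) O := by
    intro q hq
    exact ((hOreg q hq).contPdxx).continuousWithinAt
  obtain ⟨K₁, hK₁⟩ := hOcomp.exists_bound_of_continuousOn hOcont
  set KO := max K₁ 0 with hKOdef
  have hKO0 : 0 ≤ KO := le_max_right _ _
  have hKOb : ∀ q ∈ O, |pdxx u q.1 q.2.1 q.2.2| ≤ KO := by
    intro q hq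
    calc |pdxx u q.1 q.2.1 q.2.2| = ‖pdxx u q.1 q.2.1 q.2.2‖ := (Real.norm_eq_abs _).symm
      _ ≤ K₁ := hK₁ q hq
      _ ≤ KO := le_max_left _ _
  -- Step A: the minimum principle estimate on the inner cylinder
  have stepA : ∀ τ : ℝ, T/2 < τ → τ < T → ∀ h : ℝ, 0 < h → h ≤ L/8 →
      ∀ x y t : ℝ, |x| ≤ L/4 → 0 ≤ y → y ≤ L/4 → T/2 ≤ t → t ≤ τ →
      -(KS*h^2) ≤ u (x+h) y t + u (x-h) y t - 2*u x y t := by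
    intro τ hτ1 hτ2 h hhpos hhle
    have memS : ∀ z y₀ t₀ : ℝ, |z| ≤ 3*L/8 → 0 ≤ y₀ → y₀ ≤ L/4 → T/2 ≤ t₀ → t₀ ≤ T →
        (L/8 ≤ |z| ∨ y₀ = L/4 ∨ t₀ = T/2) → ((z, y₀, t₀) : ℝ × ℝ × ℝ) ∈ S := by
      intro z y₀ t₀ h1 h2 h3 h4 h5 h6
      have h1' := abs_le.mp h1
      refine ⟨⟨⟨by linarith [h1'.1], h1'.2⟩, ⟨h2, h3⟩, ⟨h4, h5⟩⟩, ?_⟩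
      rcases h6 with h6 | h6 | h6
      · exact Or.inl (Or.inl h6)
      · exact Or.inl (Or.inr h6)
      · exact Or.inr h6
    -- chord estimate used on the parabolic boundary
    have chordS : ∀ x₀ y₀ t₀ : ℝ, |x₀| ≤ L/4 → 0 ≤ y₀ → y₀ ≤ L/4 → T/2 ≤ t₀ → t₀ ≤ τ →
        (∀ s : ℝ, 0 ≤ s → s ≤ h → (((x₀+s, y₀, t₀) : ℝ × ℝ × ℝ) ∈ S ∧
          ((x₀-s, y₀, t₀) : ℝ × ℝ × ℝ) ∈ S)) →
        -(KS*h^2) ≤ u (x₀+h) y₀ t₀ + u (x₀-h) y₀ t₀ - 2*u x₀ y₀ t₀ := by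
      intro x₀ y₀ t₀ hx₀ hy₀0 hy₀ ht₀1 ht₀2 hmem
      have hx₀' := abs_le.mp hx₀
      have ht₀0 : 0 < t₀ := by linarith
      have ht₀T : t₀ < T := by linarith
      have hsmC : ∀ s : ℝ, |s| ≤ L/4 → C21At u (x₀+s) y₀ t₀ ∧ C21At u (x₀-s) y₀ t₀ := by
        intro s hs
        have hs' := abs_le.mp hs
        constructor <;>
          (apply hsm _ y₀ t₀ _ hy₀0 (by linarith) ht₀0 ht₀T ;
           rw [abs_le] ; constructor <;> linarith [hx₀'.1, hx₀'.2, hs'.1, hs'.2])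
      have hsabs : ∀ s : ℝ, s ∈ Ioo (-(L/8)) (h+L/8) → |s| ≤ L/4 := by
        intro s hs
        rw [abs_le]
        exact ⟨by linarith [hs.1], by linarith [hs.2, hhle]⟩
      have hkey : ∀ s ∈ Ioo (-(L/8)) (h+L/8),
          HasDerivAt (fun r => u (x₀+r) y₀ t₀ + u (x₀-r) y₀ t₀ - 2*u x₀ y₀ t₀)
            (pdx u (x₀+s) y₀ t₀ - pdx u (x₀-s) y₀ t₀) s := by
        intro s hs
        obtain ⟨hC1, hC2⟩ := hsmC s (hsabs s hs)
        exact hasDerivAt_offset (fun s' => u s' y₀ t₀) x₀ s hC1.diffX hC2.diffX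
      have hgdiff : ∀ s ∈ Ioo (-(L/8)) (h+L/8),
          DifferentiableAt ℝ (fun r => u (x₀+r) y₀ t₀ + u (x₀-r) y₀ t₀ - 2*u x₀ y₀ t₀) s :=
        fun s hs => (hkey s hs).differentiableAt
      have hgderiv : ∀ s ∈ Ioo (-(L/8)) (h+L/8),
          deriv (fun r => u (x₀+r) y₀ t₀ + u (x₀-r) y₀ t₀ - 2*u x₀ y₀ t₀) s
            = pdx u (x₀+s) y₀ t₀ - pdx u (x₀-s) y₀ t₀ := fun s hs => (hkey s hs).deriv
      have hφoD : ∀ s ∈ Ioo (-(L/8)) (h+L/8),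
          HasDerivAt (fun r => pdx u (x₀+r) y₀ t₀ - pdx u (x₀-r) y₀ t₀)
            (pdxx u (x₀+s) y₀ t₀ + pdxx u (x₀-s) y₀ t₀) s := by
        intro s hs
        obtain ⟨hC1, hC2⟩ := hsmC s (hsabs s hs)
        exact hasDerivAt_offsetD (fun s' => pdx u s' y₀ t₀) x₀ s hC1.diffXX hC2.diffXX
      have hg2 : ∀ s ∈ Ioo (-(L/8)) (h+L/8),
          DifferentiableAt ℝ
            (deriv (fun r => u (x₀+r) y₀ t₀ + u (x₀-r) y₀ t₀ - 2*u x₀ y₀ t₀)) s := by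
        intro s hs
        have hev := eventuallyEq_of_mem (Ioo_mem_nhds hs.1 hs.2) hgderiv
        exact hev.differentiableAt_iff.mpr (hφoD s hs).differentiableAt
      have h00 : (0:ℝ) ∈ Ioo (-(L/8)) (h+L/8) := ⟨by linarith, by linarith⟩
      have h0 : deriv (fun r => u (x₀+r) y₀ t₀ + u (x₀-r) y₀ t₀ - 2*u x₀ y₀ t₀) 0 = 0 := by
        rw [hgderiv 0 h00]; simp
      have hAlb : ∀ s ∈ Icc (0:ℝ) h, -(2*KS) ≤
          deriv (deriv (fun r => u (x₀+r) y₀ t₀ + u (x₀-r) y₀ t₀ - 2*u x₀ y₀ t₀)) s := by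
        intro s hs
        have hsIoo : s ∈ Ioo (-(L/8)) (h+L/8) := ⟨by linarith [hs.1], by linarith [hs.2]⟩
        have hev := eventuallyEq_of_mem (Ioo_mem_nhds hsIoo.1 hsIoo.2) hgderiv
        rw [hev.deriv_eq, (hφoD s hsIoo).deriv]
        obtain ⟨hm1, hm2⟩ := hmem s hs.1 hs.2
        have hb1 : |pdxx u (x₀+s) y₀ t₀| ≤ KS := hKSb _ hm1
        have hb2 : |pdxx u (x₀-s) y₀ t₀| ≤ KS := hKSb _ hm2
        have hb1' := (abs_le.mp hb1).1
        have hb2' := (abs_le.mp hb2).1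
        linarith
      have hchord := chord_lower hhpos (show (0:ℝ) < L/8 by linarith) hgdiff hg2 h0 hAlb
      have hchord' : u (x₀+0) y₀ t₀ + u (x₀-0) y₀ t₀ - 2*u x₀ y₀ t₀ + (-(2*KS))/2*h^2 ≤
          u (x₀+h) y₀ t₀ + u (x₀-h) y₀ t₀ - 2*u x₀ y₀ t₀ := hchord
      simp only [add_zero, sub_zero] at hchord'
      nlinarith [hchord']
    -- the ε-perturbed minimum principle
    intro x y t hx hy0 hy ht1 ht2
    have hmain : ∀ ε : ℝ, 0 < ε →
        -(KS*h^2) - ε*(2*T) ≤ u (x+h) y t + u (x-h) y t - 2*u x y t := by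
      intro ε hε
      set D : Set (ℝ × ℝ × ℝ) := Icc (-(L/4)) (L/4) ×ˢ Icc (0:ℝ) (L/4) ×ˢ Icc (T/2) τ
        with hDdef
      have hDcomp : IsCompact D := (isCompact_Icc).prod ((isCompact_Icc).prod isCompact_Icc)
      have hDne : D.Nonempty :=
        ⟨(0, 0, T/2), ⟨⟨by linarith, by linarith⟩, ⟨le_refl 0, by linarith⟩,
          ⟨le_refl _, le_of_lt hτ1⟩⟩⟩
      have hDreg : ∀ q : ℝ × ℝ × ℝ, q ∈ D → ∀ z : ℝ, |z - q.1| ≤ L/8 →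
          C21At u z q.2.1 q.2.2 := by
        intro q hq z hz
        obtain ⟨hq1, hq2, hq3⟩ := hq
        have hz' := abs_le.mp hz
        apply hsm _ _ _ _ hq2.1 (by linarith [hq2.2]) (by linarith [hq3.1]) (by linarith [hq3.2, hτ2])
        rw [abs_le]
        constructor <;> linarith [hq1.1, hq1.2, hz'.1, hz'.2]
      have hWcont : ContinuousOn (fun q : ℝ × ℝ × ℝ =>
          u (q.1+h) q.2.1 q.2.2 + u (q.1-h) q.2.1 q.2.2 - 2*u q.1 q.2.1 q.2.2 + ε*q.2.2) D := by
        intro q hq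
        have hC1 : C21At u (q.1+h) q.2.1 q.2.2 := hDreg q hq (q.1+h)
          (by rw [show q.1 + h - q.1 = h by ring, abs_of_nonneg (le_of_lt hhpos)]; exact hhle)
        have hC2 : C21At u (q.1-h) q.2.1 q.2.2 := hDreg q hq (q.1-h)
          (by rw [show q.1 - h - q.1 = -h by ring, abs_neg, abs_of_nonneg (le_of_lt hhpos)]; exact hhle)
        have hC3 : C21At u q.1 q.2.1 q.2.2 := hDreg q hq q.1 (by simp; linarith)
        have hm1 : ContinuousAt (fun q' : ℝ × ℝ × ℝ => ((q'.1 + h, q'.2.1, q'.2.2) : ℝ × ℝ × ℝ)) q := by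
          fun_prop
        have hm2 : ContinuousAt (fun q' : ℝ × ℝ × ℝ => ((q'.1 - h, q'.2.1, q'.2.2) : ℝ × ℝ × ℝ)) q := by
          fun_prop
        have ha1 : ContinuousAt (fun q' : ℝ × ℝ × ℝ => u (q'.1+h) q'.2.1 q'.2.2) q :=
          ContinuousAt.comp (f := fun q' : ℝ × ℝ × ℝ => ((q'.1 + h, q'.2.1, q'.2.2) : ℝ × ℝ × ℝ))
            hC1.contU hm1
        have ha2 : ContinuousAt (fun q' : ℝ × ℝ × ℝ => u (q'.1-h) q'.2.1 q'.2.2) q :=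
          ContinuousAt.comp (f := fun q' : ℝ × ℝ × ℝ => ((q'.1 - h, q'.2.1, q'.2.2) : ℝ × ℝ × ℝ))
            hC2.contU hm2
        have ha3 : ContinuousAt (fun q' : ℝ × ℝ × ℝ => u q'.1 q'.2.1 q'.2.2) q := hC3.contU
        have ha4 : ContinuousAt (fun q' : ℝ × ℝ × ℝ => ε*q'.2.2) q :=
          (continuous_const.mul (continuous_snd.comp continuous_snd)).continuousAt
        exact (((ha1.add ha2).sub (ha3.const_mul 2)).add ha4).continuousWithinAt
      obtain ⟨q₀, hq₀D, hq₀min'⟩ := hDcomp.exists_isMinOn hDne hWcont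
      have hq₀min := isMinOn_iff.mp hq₀min'
      obtain ⟨x₀, y₀, t₀⟩ := q₀
      have hx₀ : x₀ ∈ Icc (-(L/4)) (L/4) := hq₀D.1
      have hy₀ : y₀ ∈ Icc (0:ℝ) (L/4) := hq₀D.2.1
      have ht₀ : t₀ ∈ Icc (T/2) τ := hq₀D.2.2
      have ht₀0 : 0 < t₀ := by linarith [ht₀.1]
      have ht₀T : t₀ < T := lt_of_le_of_lt ht₀.2 hτ2
      have hxyt : ((x, y, t) : ℝ × ℝ × ℝ) ∈ D :=
        ⟨⟨(abs_le.mp hx).1, (abs_le.mp hx).2⟩, ⟨hy0, hy⟩, ⟨ht1, ht2⟩⟩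
      have hmin0 : u (x₀+h) y₀ t₀ + u (x₀-h) y₀ t₀ - 2*u x₀ y₀ t₀ + ε*t₀ ≤
          u (x+h) y t + u (x-h) y t - 2*u x y t + ε*t := hq₀min (x, y, t) hxyt
      by_cases hbd : t₀ = T/2 ∨ x₀ = -(L/4) ∨ x₀ = L/4 ∨ y₀ = 0 ∨ y₀ = L/4
      · -- parabolic boundary case
        have habs₀ : |x₀| ≤ L/4 := abs_le.mpr ⟨hx₀.1, hx₀.2⟩
        have habs₀' := abs_le.mp habs₀
        have ht₀Tle : t₀ ≤ T := le_of_lt ht₀T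
        have hVq₀ : -(KS*h^2) ≤ u (x₀+h) y₀ t₀ + u (x₀-h) y₀ t₀ - 2*u x₀ y₀ t₀ := by
          rcases hbd with hbt | hbx | hbx | hby | hby
          · -- bottom face t₀ = T/2
            apply chordS x₀ y₀ t₀ habs₀ hy₀.1 hy₀.2 ht₀.1 ht₀.2
            intro s hs0 hsh
            constructor
            · apply memS _ _ _ ?_ hy₀.1 hy₀.2 ht₀.1 ht₀Tle (Or.inr (Or.inr hbt))
              rw [abs_le]; constructor <;> linarith [hhle]
            · apply memS _ _ _ ?_ hy₀.1 hy₀.2 ht₀.1 ht₀Tle (Or.inr (Or.inr hbt))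
              rw [abs_le]; constructor <;> linarith [hhle]
          · -- left face x₀ = -(L/4)
            apply chordS x₀ y₀ t₀ habs₀ hy₀.1 hy₀.2 ht₀.1 ht₀.2
            intro s hs0 hsh
            constructor
            · apply memS _ _ _ ?_ hy₀.1 hy₀.2 ht₀.1 ht₀Tle
              · left
                rw [hbx, show -(L/4) + s = -(L/4 - s) by ring, abs_neg,
                  abs_of_nonneg (by linarith [hhle] : (0:ℝ) ≤ L/4 - s)]
                linarith [hhle]
              · rw [abs_le]; constructor <;> linarith [hhle]
            · apply memS _ _ _ ?_ hy₀.1 hy₀.2 ht₀.1 ht₀Tle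
              · left
                rw [hbx, show -(L/4) - s = -(L/4 + s) by ring, abs_neg,
                  abs_of_nonneg (by linarith : (0:ℝ) ≤ L/4 + s)]
                linarith
              · rw [abs_le]; constructor <;> linarith [hhle]
          · -- right face x₀ = L/4
            apply chordS x₀ y₀ t₀ habs₀ hy₀.1 hy₀.2 ht₀.1 ht₀.2
            intro s hs0 hsh
            constructor
            · apply memS _ _ _ ?_ hy₀.1 hy₀.2 ht₀.1 ht₀Tle
              · left
                rw [hbx, abs_of_nonneg (by linarith : (0:ℝ) ≤ L/4 + s)]
                linarith
              · rw [abs_le]; constructor <;> linarith [hhle]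
            · apply memS _ _ _ ?_ hy₀.1 hy₀.2 ht₀.1 ht₀Tle
              · left
                rw [hbx, abs_of_nonneg (by linarith [hhle] : (0:ℝ) ≤ L/4 - s)]
                linarith [hhle]
              · rw [abs_le]; constructor <;> linarith [hhle]
          · -- bottom boundary y₀ = 0
            subst hby
            have hb1 : u (x₀+h) 0 t₀ = 0 := hsol.bc
              (by rw [abs_lt]; constructor <;> linarith [hhle]) ⟨ht₀0, ht₀T⟩
            have hb2 : u (x₀-h) 0 t₀ = 0 := hsol.bc
              (by rw [abs_lt]; constructor <;> linarith [hhle]) ⟨ht₀0, ht₀T⟩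
            have hb3 : u x₀ 0 t₀ = 0 := hsol.bc
              (by rw [abs_lt]; constructor <;> linarith) ⟨ht₀0, ht₀T⟩
            rw [hb1, hb2, hb3]
            have : (0:ℝ) ≤ KS*h^2 := by positivity
            linarith
          · -- top face y₀ = L/4
            apply chordS x₀ y₀ t₀ habs₀ hy₀.1 hy₀.2 ht₀.1 ht₀.2
            intro s hs0 hsh
            constructor
            · apply memS _ _ _ ?_ hy₀.1 hy₀.2 ht₀.1 ht₀Tle (Or.inr (Or.inl hby))
              rw [abs_le]; constructor <;> linarith [hhle]
            · apply memS _ _ _ ?_ hy₀.1 hy₀.2 ht₀.1 ht₀Tle (Or.inr (Or.inl hby))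
              rw [abs_le]; constructor <;> linarith [hhle]
        have he1 : ε*(T/2) ≤ ε*t₀ := mul_le_mul_of_nonneg_left ht₀.1 (le_of_lt hε)
        have he2 : ε*t ≤ ε*T := mul_le_mul_of_nonneg_left (by linarith) (le_of_lt hε)
        have he3 : ε*(2*T) = 2*(ε*T) := by ring
        have he4 : ε*(T/2) = (ε*T)/2 := by ring
        have he5 : (0:ℝ) ≤ ε*T := by positivity
        linarith
      · -- interior minimum: contradiction
        exfalso
        push_neg at hbd
        obtain ⟨hbt, hbx1, hbx2, hby1, hby2⟩ := hbd
        have hx₀o : x₀ ∈ Ioo (-(L/4)) (L/4) :=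
          ⟨lt_of_le_of_ne hx₀.1 (Ne.symm hbx1), lt_of_le_of_ne hx₀.2 hbx2⟩
        have hy₀o : y₀ ∈ Ioo (0:ℝ) (L/4) :=
          ⟨lt_of_le_of_ne hy₀.1 (Ne.symm hby1), lt_of_le_of_ne hy₀.2 hby2⟩
        have ht₀o : T/2 < t₀ := lt_of_le_of_ne ht₀.1 (Ne.symm hbt)
        have hCat : ∀ z : ℝ, |z| ≤ L/2 → ∀ r : ℝ, 0 ≤ r → r ≤ L/4 → C21At u z r t₀ := by
          intro z hz r hr1 hr2
          have hz' := abs_le.mp hz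
          exact hsm z r t₀ (by rw [abs_le]; constructor <;> linarith [hz'.1, hz'.2])
            hr1 (by linarith) ht₀0 ht₀T
        have habs3 : ∀ s : ℝ, s ∈ Ioo (-(L/4)) (L/4) →
            (|s+h| ≤ L/2 ∧ |s-h| ≤ L/2 ∧ |s| ≤ L/2) := by
          intro s hs
          refine ⟨?_, ?_, ?_⟩ <;> (rw [abs_le]; constructor <;> linarith [hs.1, hs.2, hhle])
        -- x-direction
        have hkeyx : ∀ s ∈ Ioo (-(L/4)) (L/4),
            HasDerivAt (fun s' => u (s'+h) y₀ t₀ + u (s'-h) y₀ t₀ - 2*u s' y₀ t₀)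
              (pdx u (s+h) y₀ t₀ + pdx u (s-h) y₀ t₀ - 2*pdx u s y₀ t₀) s := by
          intro s hs
          obtain ⟨hz1, hz2, hz3⟩ := habs3 s hs
          exact hasDerivAt_center (fun s' => u s' y₀ t₀) h s
            ((hCat _ hz1 y₀ hy₀.1 hy₀.2).diffX) ((hCat _ hz2 y₀ hy₀.1 hy₀.2).diffX)
            ((hCat _ hz3 y₀ hy₀.1 hy₀.2).diffX)
        have hgderivx : ∀ s ∈ Ioo (-(L/4)) (L/4),
            deriv (fun s' => u (s'+h) y₀ t₀ + u (s'-h) y₀ t₀ - 2*u s' y₀ t₀) s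
              = pdx u (s+h) y₀ t₀ + pdx u (s-h) y₀ t₀ - 2*pdx u s y₀ t₀ :=
          fun s hs => (hkeyx s hs).deriv
        obtain ⟨hzx1, hzx2, hzx3⟩ := habs3 x₀ hx₀o
        have hφxD : HasDerivAt
            (fun s' => pdx u (s'+h) y₀ t₀ + pdx u (s'-h) y₀ t₀ - 2*pdx u s' y₀ t₀)
            (pdxx u (x₀+h) y₀ t₀ + pdxx u (x₀-h) y₀ t₀ - 2*pdxx u x₀ y₀ t₀) x₀ :=
          hasDerivAt_center (fun s' => pdx u s' y₀ t₀) h x₀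
            ((hCat _ hzx1 y₀ hy₀.1 hy₀.2).diffXX) ((hCat _ hzx2 y₀ hy₀.1 hy₀.2).diffXX)
            ((hCat _ hzx3 y₀ hy₀.1 hy₀.2).diffXX)
        have hevx := eventuallyEq_of_mem (Ioo_mem_nhds hx₀o.1 hx₀o.2) hgderivx
        have hgx2 : DifferentiableAt ℝ
            (deriv (fun s' => u (s'+h) y₀ t₀ + u (s'-h) y₀ t₀ - 2*u s' y₀ t₀)) x₀ :=
          hevx.differentiableAt_iff.mpr hφxD.differentiableAt
        have hminx : ∀ s ∈ Ioo (-(L/4)) (L/4),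
            (fun s' => u (s'+h) y₀ t₀ + u (s'-h) y₀ t₀ - 2*u s' y₀ t₀) x₀ ≤
            (fun s' => u (s'+h) y₀ t₀ + u (s'-h) y₀ t₀ - 2*u s' y₀ t₀) s := by
          intro s hs
          have hmem : ((s, y₀, t₀) : ℝ × ℝ × ℝ) ∈ D :=
            ⟨⟨le_of_lt hs.1, le_of_lt hs.2⟩, hy₀, ht₀⟩
          have hq : u (x₀+h) y₀ t₀ + u (x₀-h) y₀ t₀ - 2*u x₀ y₀ t₀ + ε*t₀ ≤
              u (s+h) y₀ t₀ + u (s-h) y₀ t₀ - 2*u s y₀ t₀ + ε*t₀ := hq₀min (s, y₀, t₀) hmem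
          simp only
          linarith
        obtain ⟨hd1x, hd2x⟩ := isLocalMin_deriv2 hx₀o
          (fun s hs => (hkeyx s hs).differentiableAt) hgx2 hminx
        have Epx : pdx u (x₀+h) y₀ t₀ + pdx u (x₀-h) y₀ t₀ - 2*pdx u x₀ y₀ t₀ = 0 := by
          rw [← hgderivx x₀ hx₀o]; exact hd1x
        have EAx : 0 ≤ pdxx u (x₀+h) y₀ t₀ + pdxx u (x₀-h) y₀ t₀ - 2*pdxx u x₀ y₀ t₀ := by
          rw [hevx.deriv_eq, hφxD.deriv] at hd2x
          exact hd2x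
        -- y-direction
        have hkeyy : ∀ r ∈ Ioo (0:ℝ) (L/4),
            HasDerivAt (fun r' => u (x₀+h) r' t₀ + u (x₀-h) r' t₀ - 2*u x₀ r' t₀)
              (pdy u (x₀+h) r t₀ + pdy u (x₀-h) r t₀ - 2*pdy u x₀ r t₀) r := by
          intro r hr
          exact hasDerivAt_comb3 (fun r' => u (x₀+h) r' t₀) (fun r' => u (x₀-h) r' t₀)
            (fun r' => u x₀ r' t₀) r
            ((hCat _ hzx1 r (le_of_lt hr.1) (le_of_lt hr.2)).diffY)
            ((hCat _ hzx2 r (le_of_lt hr.1) (le_of_lt hr.2)).diffY)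
            ((hCat _ hzx3 r (le_of_lt hr.1) (le_of_lt hr.2)).diffY)
        have hgderivy : ∀ r ∈ Ioo (0:ℝ) (L/4),
            deriv (fun r' => u (x₀+h) r' t₀ + u (x₀-h) r' t₀ - 2*u x₀ r' t₀) r
              = pdy u (x₀+h) r t₀ + pdy u (x₀-h) r t₀ - 2*pdy u x₀ r t₀ :=
          fun r hr => (hkeyy r hr).deriv
        have hφyD : HasDerivAt
            (fun r' => pdy u (x₀+h) r' t₀ + pdy u (x₀-h) r' t₀ - 2*pdy u x₀ r' t₀)
            (pdyy u (x₀+h) y₀ t₀ + pdyy u (x₀-h) y₀ t₀ - 2*pdyy u x₀ y₀ t₀) y₀ :=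
          hasDerivAt_comb3 (fun r' => pdy u (x₀+h) r' t₀) (fun r' => pdy u (x₀-h) r' t₀)
            (fun r' => pdy u x₀ r' t₀) y₀
            ((hCat _ hzx1 y₀ hy₀.1 hy₀.2).diffYY) ((hCat _ hzx2 y₀ hy₀.1 hy₀.2).diffYY)
            ((hCat _ hzx3 y₀ hy₀.1 hy₀.2).diffYY)
        have hevy := eventuallyEq_of_mem (Ioo_mem_nhds hy₀o.1 hy₀o.2) hgderivy
        have hgy2 : DifferentiableAt ℝ
            (deriv (fun r' => u (x₀+h) r' t₀ + u (x₀-h) r' t₀ - 2*u x₀ r' t₀)) y₀ :=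
          hevy.differentiableAt_iff.mpr hφyD.differentiableAt
        have hminy : ∀ r ∈ Ioo (0:ℝ) (L/4),
            (fun r' => u (x₀+h) r' t₀ + u (x₀-h) r' t₀ - 2*u x₀ r' t₀) y₀ ≤
            (fun r' => u (x₀+h) r' t₀ + u (x₀-h) r' t₀ - 2*u x₀ r' t₀) r := by
          intro r hr
          have hmem : ((x₀, r, t₀) : ℝ × ℝ × ℝ) ∈ D :=
            ⟨hx₀, ⟨le_of_lt hr.1, le_of_lt hr.2⟩, ht₀⟩
          have hq : u (x₀+h) y₀ t₀ + u (x₀-h) y₀ t₀ - 2*u x₀ y₀ t₀ + ε*t₀ ≤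
              u (x₀+h) r t₀ + u (x₀-h) r t₀ - 2*u x₀ r t₀ + ε*t₀ := hq₀min (x₀, r, t₀) hmem
          simp only
          linarith
        obtain ⟨hd1y, hd2y⟩ := isLocalMin_deriv2 hy₀o
          (fun r hr => (hkeyy r hr).differentiableAt) hgy2 hminy
        have Epy : pdy u (x₀+h) y₀ t₀ + pdy u (x₀-h) y₀ t₀ - 2*pdy u x₀ y₀ t₀ = 0 := by
          rw [← hgderivy y₀ hy₀o]; exact hd1y
        have EAy : 0 ≤ pdyy u (x₀+h) y₀ t₀ + pdyy u (x₀-h) y₀ t₀ - 2*pdyy u x₀ y₀ t₀ := by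
          rw [hevy.deriv_eq, hφyD.deriv] at hd2y
          exact hd2y
        -- t-direction
        have hkeyt : HasDerivAt
            (fun t' => u (x₀+h) y₀ t' + u (x₀-h) y₀ t' - 2*u x₀ y₀ t' + ε*t')
            (pdt u (x₀+h) y₀ t₀ + pdt u (x₀-h) y₀ t₀ - 2*pdt u x₀ y₀ t₀ + ε) t₀ := by
          have hbase := hasDerivAt_comb3 (fun t' => u (x₀+h) y₀ t') (fun t' => u (x₀-h) y₀ t')
            (fun t' => u x₀ y₀ t') t₀
            ((hCat _ hzx1 y₀ hy₀.1 hy₀.2).diffT) ((hCat _ hzx2 y₀ hy₀.1 hy₀.2).diffT)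
            ((hCat _ hzx3 y₀ hy₀.1 hy₀.2).diffT)
          have hlin : HasDerivAt (fun t' : ℝ => ε*t') ε t₀ := by
            simpa using (hasDerivAt_id t₀).const_mul ε
          exact hbase.add hlin
        have hmint : ∀ t' ∈ Icc (T/2) t₀,
            (fun t' => u (x₀+h) y₀ t' + u (x₀-h) y₀ t' - 2*u x₀ y₀ t' + ε*t') t₀ ≤
            (fun t' => u (x₀+h) y₀ t' + u (x₀-h) y₀ t' - 2*u x₀ y₀ t' + ε*t') t' := by
          intro t' ht'
          have hmem : ((x₀, y₀, t') : ℝ × ℝ × ℝ) ∈ D :=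
            ⟨hx₀, hy₀, ⟨ht'.1, le_trans ht'.2 ht₀.2⟩⟩
          have hq : u (x₀+h) y₀ t₀ + u (x₀-h) y₀ t₀ - 2*u x₀ y₀ t₀ + ε*t₀ ≤
              u (x₀+h) y₀ t' + u (x₀-h) y₀ t' - 2*u x₀ y₀ t' + ε*t' := hq₀min (x₀, y₀, t') hmem
          simp only
          linarith
        have hdt := deriv_left_nonpos ht₀o hkeyt.differentiableAt hmint
        rw [hkeyt.deriv] at hdt
        -- the PDE at the three points
        have hy₀L : y₀ ∈ Ioo (0:ℝ) L := ⟨hy₀o.1, by linarith [hy₀o.2]⟩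
        have htIoo : t₀ ∈ Ioo (0:ℝ) T := ⟨ht₀0, ht₀T⟩
        have hzx1' := abs_le.mp hzx1
        have hzx2' := abs_le.mp hzx2
        have hzx3' := abs_le.mp hzx3
        have pde1 := hsol.pde (show |x₀+h| < L by
          rw [abs_lt]; constructor <;> linarith [hzx1'.1, hzx1'.2]) hy₀L htIoo
        have pde2 := hsol.pde (show |x₀-h| < L by
          rw [abs_lt]; constructor <;> linarith [hzx2'.1, hzx2'.2]) hy₀L htIoo
        have pde3 := hsol.pde (show |x₀| < L by
          rw [abs_lt]; constructor <;> linarith [hzx3'.1, hzx3'.2]) hy₀L htIoo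
        have Emid : 2 * gradNorm u x₀ y₀ t₀ ^ p ≤
            gradNorm u (x₀+h) y₀ t₀ ^ p + gradNorm u (x₀-h) y₀ t₀ ^ p := by
          have h1 : pdx u (x₀+h) y₀ t₀ + pdx u (x₀-h) y₀ t₀ = 2*pdx u x₀ y₀ t₀ := by linarith
          have h2 : pdy u (x₀+h) y₀ t₀ + pdy u (x₀-h) y₀ t₀ = 2*pdy u x₀ y₀ t₀ := by linarith
          have := grad_mid hp1 h1 h2
          simpa [gradNorm] using this
        linarith [pde1, pde2, pde3, EAx, EAy, hdt, Emid, hε]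
    -- let ε → 0
    by_contra hcon
    push_neg at hcon
    have hεp : 0 < (-(KS*h^2) - (u (x+h) y t + u (x-h) y t - 2*u x y t))/(4*T) := by
      apply div_pos (by linarith) (by linarith)
    have hm := hmain _ hεp
    have hq : ((-(KS*h^2) - (u (x+h) y t + u (x-h) y t - 2*u x y t))/(4*T))*(2*T)
        = (-(KS*h^2) - (u (x+h) y t + u (x-h) y t - 2*u x y t))/2 := by
      field_simp
      ring
    rw [hq] at hm
    linarith
  -- Step B: pointwise bound for t < T
  have stepB : ∀ x y t : ℝ, |x| ≤ L/8 → 0 ≤ y → y ≤ L/4 → T/2 ≤ t → t < T →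
      -KS ≤ pdxx u x y t := by
    intro x y t hx hy0 hy ht1 ht2
    by_contra hcon
    push_neg at hcon
    set η := (-KS - pdxx u x y t)/2 with hη
    have hP : pdxx u x y t = -KS - 2*η := by rw [hη]; ring
    have hηpos : 0 < η := by rw [hη]; linarith
    have hx' := abs_le.mp hx
    have ht0 : 0 < t := by linarith
    have hxL : |x| ≤ L := by rw [abs_le]; constructor <;> linarith [hx'.1, hx'.2]
    have hC : C21At u x y t := hsm x y t hxL hy0 (by linarith) ht0 ht2
    have hmapx : Continuous (fun s : ℝ => ((s, y, t) : ℝ × ℝ × ℝ)) := by fun_prop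
    have hmapx' : ContinuousAt (fun s : ℝ => ((s, y, t) : ℝ × ℝ × ℝ)) x := hmapx.continuousAt
    have hcontx : ContinuousAt (fun s => pdxx u s y t) x :=
      ContinuousAt.comp (f := fun s : ℝ => ((s, y, t) : ℝ × ℝ × ℝ)) (hC.contPdxx) hmapx'
    obtain ⟨δ₁, hδ₁, hball⟩ := Metric.continuousAt_iff.mp hcontx η hηpos
    set h := min (δ₁/2) (L/8) with hhdef
    have hhpos : 0 < h := lt_min (by linarith) (by linarith)
    have hhle : h ≤ L/8 := min_le_right _ _
    have hhlt : h < δ₁ := lt_of_le_of_lt (min_le_left _ _) (by linarith)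
    have hbound : ∀ z : ℝ, |z - x| ≤ h → pdxx u z y t ≤ -KS - η := by
      intro z hz
      have hd : dist z x < δ₁ := by
        rw [Real.dist_eq]; exact lt_of_le_of_lt hz hhlt
      have hb := hball hd
      rw [Real.dist_eq] at hb
      have h2 := (abs_lt.mp hb).2
      rw [hP] at h2
      linarith
    have hsmC : ∀ s : ℝ, |s| ≤ L/4 → C21At u (x+s) y t ∧ C21At u (x-s) y t := by
      intro s hs
      have hs' := abs_le.mp hs
      constructor <;>
        (apply hsm _ y t _ hy0 (by linarith) ht0 ht2 ;
         rw [abs_le] ; constructor <;> linarith [hx'.1, hx'.2, hs'.1, hs'.2])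
    have hsabs : ∀ s : ℝ, s ∈ Ioo (-(L/8)) (h+L/8) → |s| ≤ L/4 := by
      intro s hs
      rw [abs_le]
      constructor
      · linarith [hs.1]
      · linarith [hs.2, hhle]
    have hkey : ∀ s ∈ Ioo (-(L/8)) (h+L/8),
        HasDerivAt (fun r => u (x+r) y t + u (x-r) y t - 2*u x y t)
          (pdx u (x+s) y t - pdx u (x-s) y t) s := by
      intro s hs
      obtain ⟨hC1, hC2⟩ := hsmC s (hsabs s hs)
      exact hasDerivAt_offset (fun s' => u s' y t) x s hC1.diffX hC2.diffX
    have hgdiff : ∀ s ∈ Ioo (-(L/8)) (h+L/8),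
        DifferentiableAt ℝ (fun r => u (x+r) y t + u (x-r) y t - 2*u x y t) s :=
      fun s hs => (hkey s hs).differentiableAt
    have hgderiv : ∀ s ∈ Ioo (-(L/8)) (h+L/8),
        deriv (fun r => u (x+r) y t + u (x-r) y t - 2*u x y t) s
          = pdx u (x+s) y t - pdx u (x-s) y t :=
      fun s hs => (hkey s hs).deriv
    have hφoD : ∀ s ∈ Ioo (-(L/8)) (h+L/8),
        HasDerivAt (fun r => pdx u (x+r) y t - pdx u (x-r) y t)
          (pdxx u (x+s) y t + pdxx u (x-s) y t) s := by
      intro s hs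
      obtain ⟨hC1, hC2⟩ := hsmC s (hsabs s hs)
      exact hasDerivAt_offsetD (fun s' => pdx u s' y t) x s hC1.diffXX hC2.diffXX
    have hg2 : ∀ s ∈ Ioo (-(L/8)) (h+L/8),
        DifferentiableAt ℝ (deriv (fun r => u (x+r) y t + u (x-r) y t - 2*u x y t)) s := by
      intro s hs
      have hev : deriv (fun r => u (x+r) y t + u (x-r) y t - 2*u x y t)
          =ᶠ[𝓝 s] (fun r => pdx u (x+r) y t - pdx u (x-r) y t) :=
        eventuallyEq_of_mem (Ioo_mem_nhds hs.1 hs.2) hgderiv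
      exact hev.differentiableAt_iff.mpr (hφoD s hs).differentiableAt
    have h00 : (0:ℝ) ∈ Ioo (-(L/8)) (h+L/8) := ⟨by linarith, by linarith⟩
    have h0 : deriv (fun r => u (x+r) y t + u (x-r) y t - 2*u x y t) 0 = 0 := by
      rw [hgderiv 0 h00]; simp
    have hAub : ∀ s ∈ Icc (0:ℝ) h,
        deriv (deriv (fun r => u (x+r) y t + u (x-r) y t - 2*u x y t)) s ≤ 2*(-KS - η) := by
      intro s hs
      have hsIoo : s ∈ Ioo (-(L/8)) (h+L/8) := ⟨by linarith [hs.1], by linarith [hs.2]⟩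
      have hev : deriv (fun r => u (x+r) y t + u (x-r) y t - 2*u x y t)
          =ᶠ[𝓝 s] (fun r => pdx u (x+r) y t - pdx u (x-r) y t) :=
        eventuallyEq_of_mem (Ioo_mem_nhds hsIoo.1 hsIoo.2) hgderiv
      rw [hev.deriv_eq, (hφoD s hsIoo).deriv]
      have hb1 : pdxx u (x+s) y t ≤ -KS - η := by
        apply hbound
        simp only [add_sub_cancel_left]
        rw [abs_of_nonneg hs.1]; exact hs.2
      have hb2 : pdxx u (x-s) y t ≤ -KS - η := by
        apply hbound
        have : x - s - x = -s := by ring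
        rw [this, abs_neg, abs_of_nonneg hs.1]; exact hs.2
      linarith
    have hchord := chord_upper hhpos (show (0:ℝ) < L/8 by linarith) hgdiff hg2 h0 hAub
    have hga := stepA ((t+T)/2) (by linarith) (by linarith) h hhpos hhle x y t
      (le_trans hx (by linarith)) hy0 hy ht1 (by linarith)
    have hchord' : u (x+h) y t + u (x-h) y t - 2*u x y t ≤
        u (x+0) y t + u (x-0) y t - 2*u x y t + 2*(-KS - η)/2*h^2 := hchord
    simp only [add_zero, sub_zero] at hchord'
    nlinarith [mul_pos hηpos (mul_pos hhpos hhpos), hchord', hga]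
  -- Step C: pointwise bound at t = T (excluding the singular point)
  have stepC : ∀ x y : ℝ, |x| ≤ L/8 → 0 ≤ y → y ≤ L/4 → ¬(x = 0 ∧ y = 0) →
      -KS ≤ pdxx u x y T := by
    intro x y hx hy0 hy hnp
    have hx' := abs_le.mp hx
    have hC : C21At u x y T := by
      apply hext
      · rw [abs_le]; constructor <;> linarith [hx'.1, hx'.2]
      · exact ⟨hy0, by linarith⟩
      · exact ⟨by linarith, le_refl T⟩
      · rintro ⟨h1, h2, _⟩; exact hnp ⟨h1, h2⟩
    have hmap : Continuous (fun t' : ℝ => ((x, y, t') : ℝ × ℝ × ℝ)) := by fun_prop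
    have hmap' : ContinuousAt (fun t' : ℝ => ((x, y, t') : ℝ × ℝ × ℝ)) T := hmap.continuousAt
    have hcont : ContinuousAt (fun t' => pdxx u x y t') T :=
      ContinuousAt.comp (f := fun t' : ℝ => ((x, y, t') : ℝ × ℝ × ℝ)) (hC.contPdxx) hmap'
    have htend : Tendsto (fun t' => pdxx u x y t') (𝓝[<] T) (𝓝 (pdxx u x y T)) :=
      hcont.tendsto.mono_left nhdsWithin_le_nhds
    have hIoo : Ioo (T/2) T ∈ 𝓝[<] T := by
      have h3 : Ioi (T/2) ∈ 𝓝 T := Ioi_mem_nhds (by linarith)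
      have := inter_mem (mem_nhdsWithin_of_mem_nhds h3)
        (self_mem_nhdsWithin (s := Iio T) (a := T))
      simpa [Ioi_inter_Iio] using this
    refine ge_of_tendsto htend ?_
    filter_upwards [hIoo] with t' ht'
    exact stepB x y t' hx hy0 hy (le_of_lt ht'.1) ht'.2
  -- assemble
  refine ⟨KS + KO + 1, by linarith, ?_⟩
  intro x y t hx hy ht hnp
  by_cases hcase : L/8 ≤ |x| ∨ L/4 ≤ y
  · have hq : (x, y, t) ∈ O := by
      refine ⟨⟨?_, hy, ht⟩, ?_⟩
      · rw [abs_le] at hx; exact ⟨by linarith [hx.1], hx.2⟩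
      · rcases hcase with h1 | h1
        · exact Or.inl h1
        · exact Or.inr h1
    have := hKOb (x, y, t) hq
    have h2 := (abs_le.mp this).1
    simp only at h2
    linarith
  · push_neg at hcase
    obtain ⟨hx8, hy4⟩ := hcase
    rcases lt_or_eq_of_le ht.2 with htlt | hteq
    · have := stepB x y t (le_of_lt hx8) hy.1 (le_of_lt hy4) ht.1 htlt
      linarith
    · subst hteq
      have hnp' : ¬(x = 0 ∧ y = 0) := fun ⟨h1, h2⟩ => hnp ⟨h1, h2, rfl⟩
      have := stepC x y (le_of_lt hx8) hy.1 (le_of_lt hy4) hnp'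
      linarith
end
end
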